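/- arXiv:1903.00873 — 4 statements merged into one kernel-verified Lean document; each statement's English description precedes it below -/
import Mathlib

section
/- Let n ≥ 1, let A : [0,∞) → ℝ^{n×n} be a continuous matrix-valued function, and suppose that ∫₀^t μ₂[A(s)] ds → -∞ as t → ∞. Then every solution x : [0,∞) → ℝⁿ of the linear time-varying system ẋ(t) = A(t)x(t) satisfies ‖x(t)‖₂ → 0 as t → ∞ (so the equilibrium x = 0 is globally attractive). -/
open Filter Matrix

lemma add_transpose_isHermitian {n : ℕ} (A : Matrix (Fin n) (Fin n) ℝ) :
    (A + Aᵀ).IsHermitian := by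
  ext i j
  simp [Matrix.conjTranspose_apply, Matrix.transpose_apply, add_comm]

/-- The largest eigenvalue of a real symmetric matrix. -/
noncomputable def lambdaMax {n : ℕ} (M : Matrix (Fin n) (Fin n) ℝ) (hM : M.IsHermitian) : ℝ :=
  ⨆ i, hM.eigenvalues i

/-- The Euclidean logarithmic norm `μ₂[A] = (1/2)·λ_max(A + Aᵀ)`. -/
noncomputable def mu2 {n : ℕ} (A : Matrix (Fin n) (Fin n) ℝ) : ℝ :=
  (1 / 2) * lambdaMax (A + Aᵀ) (add_transpose_isHermitian A)

open RealInnerProductSpace in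
lemma rayleigh_le {n : ℕ} [Nonempty (Fin n)] (M : Matrix (Fin n) (Fin n) ℝ)
    (hM : M.IsHermitian) (v : EuclideanSpace ℝ (Fin n)) :
    ⟪v, Matrix.toEuclideanLin M v⟫ ≤ lambdaMax M hM * ‖v‖ ^ 2 := by
  set b := hM.eigenvectorBasis with hb
  have hbd : BddAbove (Set.range hM.eigenvalues) := Set.finite_range _ |>.bddAbove
  have hsym : LinearMap.IsSymmetric (Matrix.toEuclideanLin M) :=
    Matrix.isHermitian_iff_isSymmetric.1 hM
  have hMb : ∀ i, Matrix.toEuclideanLin M (b i) = hM.eigenvalues i • b i := by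
    intro i
    have h1 := hM.mulVec_eigenvectorBasis i
    apply PiLp.ext
    intro j
    have h2 : (M *ᵥ ⇑(b i)) j = (hM.eigenvalues i • ⇑(b i)) j := by rw [h1]
    simpa [Matrix.toEuclideanLin_apply] using h2
  have key : ∀ i, ⟪v, b i⟫ * ⟪b i, Matrix.toEuclideanLin M v⟫
      = hM.eigenvalues i * ⟪b i, v⟫ ^ 2 := by
    intro i
    rw [← hsym (b i) v, hMb i, inner_smul_left, real_inner_comm v (b i)]
    simp only [starRingEnd_apply, star_trivial]
    ring
  calc ⟪v, Matrix.toEuclideanLin M v⟫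
      = ∑ i, hM.eigenvalues i * ⟪b i, v⟫ ^ 2 := by
        rw [← b.sum_inner_mul_inner v (Matrix.toEuclideanLin M v)]
        exact Finset.sum_congr rfl fun i _ => key i
    _ ≤ ∑ i, (⨆ j, hM.eigenvalues j) * ⟪b i, v⟫ ^ 2 := by
        apply Finset.sum_le_sum
        intro i _
        exact mul_le_mul_of_nonneg_right (le_ciSup hbd i) (sq_nonneg _)
    _ = lambdaMax M hM * ‖v‖ ^ 2 := by
        rw [← Finset.mul_sum]
        congr 1
        have h3 := b.sum_inner_mul_inner v v
        rw [real_inner_self_eq_norm_sq] at h3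
        rw [← h3]
        exact Finset.sum_congr rfl fun i _ => by
          rw [real_inner_comm v (b i)]; ring

lemma abs_apply_le_norm {n : ℕ} (v : EuclideanSpace ℝ (Fin n)) (i : Fin n) :
    |v i| ≤ ‖v‖ := by
  have h1 : |v i| = Real.sqrt ((v i) ^ 2) := by
    rw [Real.sqrt_sq_eq_abs]
  rw [h1, EuclideanSpace.norm_eq]
  apply Real.sqrt_le_sqrt
  have : (v i) ^ 2 ≤ ∑ j, (v j) ^ 2 :=
    Finset.single_le_sum (fun j _ => sq_nonneg (v j)) (Finset.mem_univ i)
  simpa [sq_abs] using this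

open RealInnerProductSpace in
lemma inner_toEuclideanLin_le {n : ℕ} (P : Matrix (Fin n) (Fin n) ℝ)
    (v : EuclideanSpace ℝ (Fin n)) (hv : ‖v‖ = 1) :
    ⟪v, Matrix.toEuclideanLin P v⟫ ≤ ∑ i, ∑ j, |P i j| := by
  have hva : ∀ i, |v i| ≤ 1 := fun i => hv ▸ abs_apply_le_norm v i
  have hinner : ⟪v, Matrix.toEuclideanLin P v⟫ = ∑ i, v i * ∑ j, P i j * v j := by
    rw [PiLp.inner_apply]
    refine Finset.sum_congr rfl fun i _ => ?_
    simp [Matrix.toEuclideanLin_apply, Matrix.mulVec, dotProduct, mul_comm]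
  rw [hinner]
  calc ∑ i, v i * ∑ j, P i j * v j
      ≤ ∑ i, ∑ j, |P i j| * (|v i| * |v j|) := by
        apply Finset.sum_le_sum
        intro i _
        rw [Finset.mul_sum]
        apply Finset.sum_le_sum
        intro j _
        calc v i * (P i j * v j) ≤ |v i * (P i j * v j)| := le_abs_self _
          _ = |P i j| * (|v i| * |v j|) := by rw [abs_mul, abs_mul]; ring
    _ ≤ ∑ i, ∑ j, |P i j| := by
        apply Finset.sum_le_sum; intro i _
        apply Finset.sum_le_sum; intro j _
        have h2 : |v i| * |v j| ≤ 1 := by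
          calc |v i| * |v j| ≤ 1 * 1 :=
            mul_le_mul (hva i) (hva j) (abs_nonneg _) zero_le_one
          _ = 1 := one_mul 1
        calc |P i j| * (|v i| * |v j|) ≤ |P i j| * 1 :=
              mul_le_mul_of_nonneg_left h2 (abs_nonneg _)
          _ = |P i j| := mul_one _

open RealInnerProductSpace in
lemma lambdaMax_le {n : ℕ} [Nonempty (Fin n)] (M N : Matrix (Fin n) (Fin n) ℝ)
    (hM : M.IsHermitian) (hN : N.IsHermitian) :
    lambdaMax M hM ≤ lambdaMax N hN + ∑ i, ∑ j, |(M - N) i j| := by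
  set b := hM.eigenvectorBasis with hb
  obtain ⟨i, hi⟩ := Finite.exists_max hM.eigenvalues
  have hbd : BddAbove (Set.range hM.eigenvalues) := Set.finite_range _ |>.bddAbove
  have hmax : lambdaMax M hM = hM.eigenvalues i :=
    le_antisymm (ciSup_le hi) (le_ciSup hbd i)
  have hnorm : ‖(b i : EuclideanSpace ℝ (Fin n))‖ = 1 := b.orthonormal.1 i
  have hMb : Matrix.toEuclideanLin M (b i) = hM.eigenvalues i • b i := by
    have h1 := hM.mulVec_eigenvectorBasis i
    apply PiLp.ext
    intro j
    have h2 : (M *ᵥ ⇑(b i)) j = (hM.eigenvalues i • ⇑(b i)) j := by rw [h1]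
    simpa [Matrix.toEuclideanLin_apply] using h2
  have hray : hM.eigenvalues i = ⟪(b i : EuclideanSpace ℝ (Fin n)), Matrix.toEuclideanLin M (b i)⟫ := by
    rw [hMb, real_inner_smul_right, real_inner_self_eq_norm_sq, hnorm]
    ring
  have hsplit : ⟪(b i : EuclideanSpace ℝ (Fin n)), Matrix.toEuclideanLin M (b i)⟫
      = ⟪(b i : EuclideanSpace ℝ (Fin n)), Matrix.toEuclideanLin N (b i)⟫
        + ⟪(b i : EuclideanSpace ℝ (Fin n)), Matrix.toEuclideanLin (M - N) (b i)⟫ := by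
    rw [← inner_add_right]
    congr 1
    rw [map_sub]
    simp
  have h1 : ⟪(b i : EuclideanSpace ℝ (Fin n)), Matrix.toEuclideanLin N (b i)⟫
      ≤ lambdaMax N hN := by
    have h := rayleigh_le N hN (b i)
    rwa [hnorm, one_pow, mul_one] at h
  have h2 := inner_toEuclideanLin_le (M - N) (b i) hnorm
  linarith [hmax, hray, hsplit]

lemma entrySum_continuous {n : ℕ} :
    Continuous (fun M : Matrix (Fin n) (Fin n) ℝ => ∑ i, ∑ j, |M i j|) := by
  apply continuous_finset_sum
  intro i _
  apply continuous_finset_sum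
  intro j _
  exact ((continuous_apply j).comp (continuous_apply i)).abs

lemma mu2_continuous {n : ℕ} [Nonempty (Fin n)] :
    Continuous (mu2 : Matrix (Fin n) (Fin n) ℝ → ℝ) := by
  rw [continuous_iff_continuousAt]
  intro N
  rw [ContinuousAt, tendsto_iff_dist_tendsto_zero]
  set g : Matrix (Fin n) (Fin n) ℝ → ℝ :=
    fun M => ∑ i, ∑ j, |(M - N) i j| with hg
  have hbound : ∀ M : Matrix (Fin n) (Fin n) ℝ, dist (mu2 M) (mu2 N) ≤ g M := by
    intro M
    have key : ∀ P Q : Matrix (Fin n) (Fin n) ℝ, mu2 P - mu2 Q ≤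
        (1 / 2) * ∑ i, ∑ j, |((P + Pᵀ) - (Q + Qᵀ)) i j| := by
      intro P Q
      have h := lambdaMax_le (P + Pᵀ) (Q + Qᵀ)
        (add_transpose_isHermitian P) (add_transpose_isHermitian Q)
      simp only [mu2]
      linarith
    have habs : ∀ P Q : Matrix (Fin n) (Fin n) ℝ,
        (∑ i, ∑ j, |((P + Pᵀ) - (Q + Qᵀ)) i j|) ≤ 2 * ∑ i, ∑ j, |(P - Q) i j| := by
      intro P Q
      have hsw : ∑ i, ∑ j, |(P - Q) i j| = ∑ i, ∑ j, |(P - Q) j i| := Finset.sum_comm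
      rw [two_mul]
      nth_rewrite 2 [hsw]
      rw [← Finset.sum_add_distrib]
      apply Finset.sum_le_sum
      intro i _
      rw [← Finset.sum_add_distrib]
      apply Finset.sum_le_sum
      intro j _
      have : ((P + Pᵀ) - (Q + Qᵀ)) i j = (P - Q) i j + (P - Q) j i := by
        simp [Matrix.add_apply, Matrix.sub_apply, Matrix.transpose_apply]
        ring
      rw [this]
      exact abs_add_le _ _
    have hgsym : ∑ i, ∑ j, |(N - M) i j| = g M := by
      rw [hg]
      refine Finset.sum_congr rfl fun i _ => Finset.sum_congr rfl fun j _ => ?_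
      rw [← abs_neg]
      congr 1
      simp [Matrix.sub_apply]
    rw [Real.dist_eq, abs_sub_le_iff]
    constructor
    · have := habs M N; have := key M N; simp only [hg]; linarith
    · have := habs N M; have := key N M; rw [← hgsym]; linarith
  apply squeeze_zero (fun M => dist_nonneg) hbound
  have hgc : Continuous g := by
    rw [hg]
    exact entrySum_continuous.comp (continuous_id.sub continuous_const)
  have : Tendsto g (nhds N) (nhds (g N)) := hgc.tendsto N
  simpa [hg] using this

open RealInnerProductSpace in
lemma inner_transpose_eq {n : ℕ} (P : Matrix (Fin n) (Fin n) ℝ)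
    (v : EuclideanSpace ℝ (Fin n)) :
    ⟪v, Matrix.toEuclideanLin Pᵀ v⟫ = ⟪v, Matrix.toEuclideanLin P v⟫ := by
  have h : ∀ Q : Matrix (Fin n) (Fin n) ℝ,
      ⟪v, Matrix.toEuclideanLin Q v⟫ = ∑ i, ∑ j, v i * (Q i j * v j) := by
    intro Q
    rw [PiLp.inner_apply]
    refine Finset.sum_congr rfl fun i _ => ?_
    simp [Matrix.toEuclideanLin_apply, Matrix.mulVec, dotProduct,
      Finset.mul_sum, mul_comm]
  rw [h, h, Finset.sum_comm]
  refine Finset.sum_congr rfl fun i _ => Finset.sum_congr rfl fun j _ => ?_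
  rw [Matrix.transpose_apply]
  ring

open RealInnerProductSpace in
lemma inner_le_mu2 {n : ℕ} [Nonempty (Fin n)] (P : Matrix (Fin n) (Fin n) ℝ)
    (v : EuclideanSpace ℝ (Fin n)) :
    ⟪v, Matrix.toEuclideanLin P v⟫ ≤ mu2 P * ⟪v, v⟫ := by
  have h1 : ⟪v, Matrix.toEuclideanLin (P + Pᵀ) v⟫ = 2 * ⟪v, Matrix.toEuclideanLin P v⟫ := by
    rw [map_add]
    simp only [LinearMap.add_apply]
    rw [inner_add_right, inner_transpose_eq]
    ring
  have h2 := rayleigh_le (P + Pᵀ) (add_transpose_isHermitian P) v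
  rw [h1] at h2
  rw [real_inner_self_eq_norm_sq, mu2]
  linarith


open RealInnerProductSpace in
/-- if `∫₀ᵗ μ₂[A(s)] ds → -∞`, then every solution of `ẋ = A(t)x`
tends to `0` in the Euclidean norm. -/
theorem stmt_0 (n : ℕ) (hn : 1 ≤ n)
    (A : ℝ → Matrix (Fin n) (Fin n) ℝ)
    (hA : ContinuousOn A (Set.Ici (0 : ℝ)))
    (hμ : Tendsto (fun t : ℝ => ∫ s in (0:ℝ)..t, mu2 (A s)) atTop atBot)
    (x : ℝ → EuclideanSpace ℝ (Fin n))
    (hx : ∀ t : ℝ, 0 ≤ t → HasDerivAt x (Matrix.toEuclideanLin (A t) (x t)) t) :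
    Tendsto (fun t : ℝ => ‖x t‖) atTop (nhds 0) := by
  have hne : Nonempty (Fin n) := Fin.pos_iff_nonempty.mp hn
  -- modified coefficient continuous on all of ℝ
  set c : ℝ → ℝ := fun t => mu2 (A (max t 0)) with hcdef
  have hAc : Continuous (fun t : ℝ => A (max t 0)) :=
    hA.comp_continuous (continuous_id.max continuous_const) (fun t => Set.mem_Ici.mpr (le_max_right _ _))
  have hcont : Continuous c := mu2_continuous.comp hAc
  set I : ℝ → ℝ := fun t => ∫ s in (0:ℝ)..t, c s with hIdef
  have hI : ∀ t : ℝ, HasDerivAt I (c t) t := by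
    intro t
    exact intervalIntegral.integral_hasDerivAt_right
      (hcont.intervalIntegrable 0 t)
      (hcont.stronglyMeasurableAtFilter _ _)
      hcont.continuousAt
  set h : ℝ → ℝ := fun t => ⟪x t, x t⟫ * Real.exp (-2 * I t) with hhdef
  -- derivative of h at t ≥ 0
  have hderiv : ∀ t : ℝ, 0 ≤ t → HasDerivAt h
      ((⟪x t, Matrix.toEuclideanLin (A t) (x t)⟫ + ⟪Matrix.toEuclideanLin (A t) (x t), x t⟫)
        * Real.exp (-2 * I t)
        + ⟪x t, x t⟫ * (Real.exp (-2 * I t) * (-2 * c t))) t := by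
    intro t ht
    have hf : HasDerivAt (fun t => ⟪x t, x t⟫)
        (⟪x t, Matrix.toEuclideanLin (A t) (x t)⟫ + ⟪Matrix.toEuclideanLin (A t) (x t), x t⟫) t := by
      exact (hx t ht).inner ℝ (hx t ht)
    have hexp : HasDerivAt (fun t => Real.exp (-2 * I t))
        (Real.exp (-2 * I t) * (-2 * c t)) t := by
      have := ((hI t).const_mul (-2 : ℝ)).exp
      simpa [mul_comm] using this
    exact hf.mul hexp
  have hderiv_nonpos : ∀ t : ℝ, 0 ≤ t →
      (⟪x t, Matrix.toEuclideanLin (A t) (x t)⟫ + ⟪Matrix.toEuclideanLin (A t) (x t), x t⟫)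
        * Real.exp (-2 * I t)
        + ⟪x t, x t⟫ * (Real.exp (-2 * I t) * (-2 * c t)) ≤ 0 := by
    intro t ht
    have hct : c t = mu2 (A t) := by rw [hcdef]; simp [max_eq_left ht]
    have hkey : ⟪x t, Matrix.toEuclideanLin (A t) (x t)⟫ ≤ c t * ⟪x t, x t⟫ := by
      rw [hct]; exact inner_le_mu2 (A t) (x t)
    have hsymm : ⟪Matrix.toEuclideanLin (A t) (x t), x t⟫
        = ⟪x t, Matrix.toEuclideanLin (A t) (x t)⟫ := real_inner_comm _ _
    have hexp_pos : 0 < Real.exp (-2 * I t) := Real.exp_pos _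
    rw [hsymm]
    have : (⟪x t, Matrix.toEuclideanLin (A t) (x t)⟫ + ⟪x t, Matrix.toEuclideanLin (A t) (x t)⟫)
        * Real.exp (-2 * I t) + ⟪x t, x t⟫ * (Real.exp (-2 * I t) * (-2 * c t))
        = (2 * (⟪x t, Matrix.toEuclideanLin (A t) (x t)⟫ - c t * ⟪x t, x t⟫))
          * Real.exp (-2 * I t) := by ring
    rw [this]
    apply mul_nonpos_of_nonpos_of_nonneg
    · linarith
    · exact hexp_pos.le
  -- h is antitone on [0, ∞)
  have hanti : AntitoneOn h (Set.Ici (0 : ℝ)) := by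
    apply antitoneOn_of_deriv_nonpos (convex_Ici 0)
    · intro t ht
      exact ((hderiv t ht).continuousAt).continuousWithinAt
    · intro t ht
      rw [interior_Ici] at ht
      exact ((hderiv t (le_of_lt ht)).differentiableAt).differentiableWithinAt
    · intro t ht
      rw [interior_Ici] at ht
      rw [(hderiv t (le_of_lt ht)).deriv]
      exact hderiv_nonpos t (le_of_lt ht)
  -- consequence: ⟪x t, x t⟫ ≤ h 0 * exp (2 I t) for t ≥ 0
  have hI0 : I 0 = 0 := intervalIntegral.integral_same
  have hbound : ∀ t : ℝ, 0 ≤ t → ⟪x t, x t⟫ ≤ ⟪x 0, x 0⟫ * Real.exp (2 * I t) := by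
    intro t ht
    have := hanti (Set.self_mem_Ici) (Set.mem_Ici.mpr ht) ht
    rw [hhdef] at this
    simp only [hI0, mul_zero, neg_zero, Real.exp_zero, mul_one] at this
    have h2 : ⟪x t, x t⟫ * Real.exp (-2 * I t) * Real.exp (2 * I t)
        ≤ ⟪x 0, x 0⟫ * Real.exp (2 * I t) :=
      mul_le_mul_of_nonneg_right (by simpa using this) (Real.exp_pos _).le
    calc ⟪x t, x t⟫ = ⟪x t, x t⟫ * Real.exp (-2 * I t) * Real.exp (2 * I t) := by
          rw [mul_assoc, ← Real.exp_add]
          norm_num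
      _ ≤ ⟪x 0, x 0⟫ * Real.exp (2 * I t) := h2
  -- I tends to -∞
  have hIeq : ∀ t : ℝ, 0 ≤ t → I t = ∫ s in (0:ℝ)..t, mu2 (A s) := by
    intro t ht
    apply intervalIntegral.integral_congr
    intro s hs
    rw [Set.uIcc_of_le ht] at hs
    rw [hcdef]
    simp [max_eq_left hs.1]
  have hItends : Tendsto I atTop atBot := by
    apply Tendsto.congr' _ hμ
    filter_upwards [eventually_ge_atTop (0:ℝ)] with t ht
    exact (hIeq t ht).symm
  have hexp_tends : Tendsto (fun t => ⟪x 0, x 0⟫ * Real.exp (2 * I t)) atTop (nhds 0) := by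
    have h2I : Tendsto (fun t => 2 * I t) atTop atBot := hItends.const_mul_atBot two_pos
    have := Real.tendsto_exp_atBot.comp h2I
    have h3 := this.const_mul (⟪x 0, x 0⟫ : ℝ)
    simpa using h3
  -- conclude ‖x t‖² → 0
  have hsq : Tendsto (fun t => ⟪x t, x t⟫) atTop (nhds 0) := by
    apply squeeze_zero' (g := fun t => ⟪x 0, x 0⟫ * Real.exp (2 * I t))
    · filter_upwards with t
      exact real_inner_self_nonneg
    · filter_upwards [eventually_ge_atTop (0:ℝ)] with t ht
      exact hbound t ht
    · exact hexp_tends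
  have hnorm_eq : ∀ t, ‖x t‖ = Real.sqrt ⟪x t, x t⟫ := by
    intro t
    rw [real_inner_self_eq_norm_sq, Real.sqrt_sq (norm_nonneg _)]
  have := (Real.continuous_sqrt.tendsto 0).comp hsq
  rw [Real.sqrt_zero] at this
  apply this.congr
  intro t
  exact (hnorm_eq t).symm
end

section
/- Let n ≥ 1, let A : [0,∞) → ℝ^{n×n} and w : ℝⁿ × [0,∞) → ℝⁿ be continuous, and let g : [0,∞) → [0,∞) be continuous with ‖w(x,t)‖₂ ≤ g(t) for all x ∈ ℝⁿ and t ≥ 0. Then every differentiable x : [0,∞) → ℝⁿ with x′(t) = A(t)x(t) + w(x(t), t) for all t ≥ 0 satisfies, for every t ≥ 0, ‖x(t)‖₂ ≤ ‖x(0)‖₂ · exp(∫₀^t μ₂[A(s)] ds) + ∫₀^t exp(∫_τ^t μ₂[A(s)] ds) · g(τ) dτ. -/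
open Filter Matrix

namespace MyAux

set_option linter.unusedSectionVars false

variable {n : ℕ}

lemma inner_eucl (x y : EuclideanSpace ℝ (Fin n)) : (inner ℝ x y : ℝ) = ∑ i, x i * y i := by
  simp [PiLp.inner_apply, RCLike.inner_apply, mul_comm]

lemma toEuclideanLin_app (Q : Matrix (Fin n) (Fin n) ℝ) (v : EuclideanSpace ℝ (Fin n)) (i : Fin n) :
    (Matrix.toEuclideanLin Q v : EuclideanSpace ℝ (Fin n)) i = ∑ j, Q i j * v j := by
  simp [Matrix.toEuclideanLin_apply, Matrix.mulVec, dotProduct]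

lemma toEuclideanLin_eigen {M : Matrix (Fin n) (Fin n) ℝ} (hM : M.IsHermitian) (i : Fin n) :
    Matrix.toEuclideanLin M (hM.eigenvectorBasis i) = hM.eigenvalues i • hM.eigenvectorBasis i := by
  have h := hM.mulVec_eigenvectorBasis i
  ext j
  have := congrFun h j
  simpa [Matrix.toEuclideanLin_apply] using this

lemma eigenvalue_le_lambdaMax {M : Matrix (Fin n) (Fin n) ℝ} (hM : M.IsHermitian) (i : Fin n) :
    hM.eigenvalues i ≤ lambdaMax M hM :=
  le_ciSup (Set.Finite.bddAbove (Set.finite_range _)) i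

lemma parseval (v : EuclideanSpace ℝ (Fin n)) (b : OrthonormalBasis (Fin n) ℝ (EuclideanSpace ℝ (Fin n))) :
    ∑ i, (inner ℝ (b i) v : ℝ) ^ 2 = ‖v‖ ^ 2 := by
  have h := b.sum_inner_mul_inner v v
  rw [real_inner_self_eq_norm_sq] at h
  rw [← h]
  refine Finset.sum_congr rfl fun i _ => ?_
  rw [real_inner_comm v (b i)]; ring

lemma rayleigh_le (M : Matrix (Fin n) (Fin n) ℝ) (hM : M.IsHermitian)
    (v : EuclideanSpace ℝ (Fin n)) :
    (inner ℝ (Matrix.toEuclideanLin M v) v : ℝ) ≤ lambdaMax M hM * ‖v‖ ^ 2 := by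
  classical
  set b := hM.eigenvectorBasis
  have hsym : (Matrix.toEuclideanLin M).IsSymmetric :=
    (Matrix.isHermitian_iff_isSymmetric).1 hM
  have h1 : (inner ℝ (Matrix.toEuclideanLin M v) v : ℝ)
      = ∑ i, inner ℝ (Matrix.toEuclideanLin M v) (b i) * inner ℝ (b i) v :=
    (b.sum_inner_mul_inner _ _).symm
  have h2 : ∀ i, (inner ℝ (Matrix.toEuclideanLin M v) (b i) : ℝ)
      = hM.eigenvalues i * inner ℝ (b i) v := by
    intro i
    rw [hsym v (b i), toEuclideanLin_eigen hM i, real_inner_smul_right, real_inner_comm]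
  have h3 : (inner ℝ (Matrix.toEuclideanLin M v) v : ℝ)
      = ∑ i, hM.eigenvalues i * (inner ℝ (b i) v : ℝ) ^ 2 := by
    rw [h1]; refine Finset.sum_congr rfl fun i _ => ?_; rw [h2]; ring
  have h4 : ∑ i, hM.eigenvalues i * (inner ℝ (b i) v : ℝ) ^ 2
      ≤ ∑ i, lambdaMax M hM * (inner ℝ (b i) v : ℝ) ^ 2 :=
    Finset.sum_le_sum fun i _ =>
      mul_le_mul_of_nonneg_right (eigenvalue_le_lambdaMax hM i) (sq_nonneg _)
  rw [h3]
  refine h4.trans ?_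
  rw [← Finset.mul_sum, parseval v b]

lemma exists_rayleigh_eq [Nonempty (Fin n)] (M : Matrix (Fin n) (Fin n) ℝ) (hM : M.IsHermitian) :
    ∃ v : EuclideanSpace ℝ (Fin n), ‖v‖ = 1 ∧
      lambdaMax M hM = inner ℝ (Matrix.toEuclideanLin M v) v := by
  obtain ⟨i0, hi0⟩ := Finite.exists_max fun i => hM.eigenvalues i
  have hb1 : ‖hM.eigenvectorBasis i0‖ = 1 := hM.eigenvectorBasis.orthonormal.1 i0
  refine ⟨hM.eigenvectorBasis i0, hb1, ?_⟩
  have hlam : lambdaMax M hM = hM.eigenvalues i0 :=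
    le_antisymm (ciSup_le hi0) (eigenvalue_le_lambdaMax hM i0)
  rw [hlam, toEuclideanLin_eigen hM i0, real_inner_smul_left, real_inner_self_eq_norm_sq, hb1]
  ring

/-- Frobenius-type quantity. -/
noncomputable def frob (Q : Matrix (Fin n) (Fin n) ℝ) : ℝ :=
  Real.sqrt (∑ i, ∑ j, (Q i j) ^ 2)

lemma frob_nonneg (Q : Matrix (Fin n) (Fin n) ℝ) : 0 ≤ frob Q := Real.sqrt_nonneg _

lemma frob_sq (Q : Matrix (Fin n) (Fin n) ℝ) : frob Q ^ 2 = ∑ i, ∑ j, (Q i j) ^ 2 :=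
  Real.sq_sqrt (Finset.sum_nonneg fun i _ => Finset.sum_nonneg fun j _ => sq_nonneg _)

lemma frob_neg (Q : Matrix (Fin n) (Fin n) ℝ) : frob (-Q) = frob Q := by
  unfold frob
  congr 1
  refine Finset.sum_congr rfl fun i _ => Finset.sum_congr rfl fun j _ => ?_
  simp [neg_sq]

lemma norm_toEuclideanLin_le (Q : Matrix (Fin n) (Fin n) ℝ) (v : EuclideanSpace ℝ (Fin n)) :
    ‖Matrix.toEuclideanLin Q v‖ ≤ frob Q * ‖v‖ := by
  classical
  have hv : ‖v‖ ^ 2 = ∑ j, (v j) ^ 2 := by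
    rw [EuclideanSpace.norm_eq]
    rw [Real.sq_sqrt (Finset.sum_nonneg fun j _ => sq_nonneg _)]
    exact Finset.sum_congr rfl fun j _ => by rw [Real.norm_eq_abs, sq_abs]
  have key : ‖Matrix.toEuclideanLin Q v‖ ^ 2 ≤ (frob Q * ‖v‖) ^ 2 := by
    have hT : ‖Matrix.toEuclideanLin Q v‖ ^ 2 = ∑ i, (∑ j, Q i j * v j) ^ 2 := by
      rw [EuclideanSpace.norm_eq]
      rw [Real.sq_sqrt (Finset.sum_nonneg fun i _ => sq_nonneg _)]
      exact Finset.sum_congr rfl fun i _ => by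
        rw [Real.norm_eq_abs, sq_abs, toEuclideanLin_app]
    rw [hT, mul_pow, frob_sq, hv, Finset.sum_mul]
    refine Finset.sum_le_sum fun i _ => ?_
    exact Finset.sum_mul_sq_le_sq_mul_sq Finset.univ (fun j => Q i j) (fun j => v j)
  have h1 : 0 ≤ frob Q * ‖v‖ := mul_nonneg (frob_nonneg Q) (norm_nonneg v)
  nlinarith [norm_nonneg (Matrix.toEuclideanLin Q v)]

lemma inner_toEuclideanLin_le_frob (Q : Matrix (Fin n) (Fin n) ℝ) (v : EuclideanSpace ℝ (Fin n)) :
    (inner ℝ (Matrix.toEuclideanLin Q v) v : ℝ) ≤ frob Q * ‖v‖ ^ 2 := by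
  refine (real_inner_le_norm _ _).trans ?_
  have := mul_le_mul_of_nonneg_right (norm_toEuclideanLin_le Q v) (norm_nonneg v)
  nlinarith [norm_nonneg v]

lemma lambdaMax_sub_le [Nonempty (Fin n)] (M N : Matrix (Fin n) (Fin n) ℝ)
    (hM : M.IsHermitian) (hN : N.IsHermitian) :
    lambdaMax M hM ≤ lambdaMax N hN + frob (M - N) := by
  obtain ⟨v, hv1, hveq⟩ := exists_rayleigh_eq M hM
  have hsplit : (inner ℝ (Matrix.toEuclideanLin M v) v : ℝ)
      = inner ℝ (Matrix.toEuclideanLin N v) v + inner ℝ (Matrix.toEuclideanLin (M - N) v) v := by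
    rw [map_sub]
    simp [inner_sub_left]
  have h1 := rayleigh_le N hN v
  have h2 := inner_toEuclideanLin_le_frob (M - N) v
  rw [hveq, hsplit]
  rw [hv1] at h1 h2
  simp only [one_pow, mul_one] at h1 h2
  linarith

lemma abs_mu2_sub_le [Nonempty (Fin n)] (M N : Matrix (Fin n) (Fin n) ℝ) :
    |mu2 M - mu2 N| ≤ (1 / 2) * frob ((M + Mᵀ) - (N + Nᵀ)) := by
  have h1 := lambdaMax_sub_le (M + Mᵀ) (N + Nᵀ) (add_transpose_isHermitian M)
    (add_transpose_isHermitian N)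
  have h2 := lambdaMax_sub_le (N + Nᵀ) (M + Mᵀ) (add_transpose_isHermitian N)
    (add_transpose_isHermitian M)
  have h3 : frob ((N + Nᵀ) - (M + Mᵀ)) = frob ((M + Mᵀ) - (N + Nᵀ)) := by
    rw [← frob_neg]; congr 1; abel
  rw [h3] at h2
  rw [abs_sub_le_iff]
  unfold mu2
  constructor <;> linarith

lemma continuousOn_mu2comp [Nonempty (Fin n)] {S : Set ℝ} {B : ℝ → Matrix (Fin n) (Fin n) ℝ}
    (hB : ContinuousOn B S) : ContinuousOn (fun t => mu2 (B t)) S := by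
  intro t₀ ht₀
  have hentry : ∀ i j, ContinuousWithinAt (fun t => B t i j) S t₀ := by
    intro i j
    have h1 : Continuous fun M : Matrix (Fin n) (Fin n) ℝ => M i j :=
      (continuous_apply j).comp (continuous_apply i)
    exact (h1.comp_continuousOn hB) t₀ ht₀
  have hg : ContinuousWithinAt
      (fun t => (1 / 2 : ℝ) * frob ((B t + (B t)ᵀ) - (B t₀ + (B t₀)ᵀ))) S t₀ := by
    refine continuousWithinAt_const.mul ?_
    unfold frob
    refine Real.continuous_sqrt.continuousAt.comp_continuousWithinAt ?_
    show Tendsto (fun t => ∑ i, ∑ j, ((B t + (B t)ᵀ - (B t₀ + (B t₀)ᵀ)) i j) ^ 2)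
      (nhdsWithin t₀ S)
      (nhds (∑ i, ∑ j, ((B t₀ + (B t₀)ᵀ - (B t₀ + (B t₀)ᵀ)) i j) ^ 2))
    refine tendsto_finset_sum _ fun i _ => ?_
    refine tendsto_finset_sum _ fun j _ => ?_
    have h2 : ContinuousWithinAt
        (fun t => (B t i j + B t j i - (B t₀ i j + B t₀ j i)) ^ 2) S t₀ :=
      (((hentry i j).add (hentry j i)).sub continuousWithinAt_const).pow 2
    simp only [Matrix.sub_apply, Matrix.add_apply, Matrix.transpose_apply]
    exact h2
  have hg0 : Tendsto (fun t => (1 / 2 : ℝ) * frob ((B t + (B t)ᵀ) - (B t₀ + (B t₀)ᵀ)))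
      (nhdsWithin t₀ S) (nhds 0) := by
    have hval : (1 / 2 : ℝ) * frob ((B t₀ + (B t₀)ᵀ) - (B t₀ + (B t₀)ᵀ)) = 0 := by
      simp [frob]
    have hg0' : Tendsto (fun t => (1 / 2 : ℝ) * frob ((B t + (B t)ᵀ) - (B t₀ + (B t₀)ᵀ)))
        (nhdsWithin t₀ S) (nhds ((1 / 2 : ℝ) * frob ((B t₀ + (B t₀)ᵀ) - (B t₀ + (B t₀)ᵀ)))) := hg
    rwa [hval] at hg0'
  have hsq : Tendsto (fun t => mu2 (B t) - mu2 (B t₀)) (nhdsWithin t₀ S) (nhds 0) := by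
    refine squeeze_zero_norm (fun t => ?_) hg0
    exact abs_mu2_sub_le (B t) (B t₀)
  have h := hsq.add_const (mu2 (B t₀))
  show Tendsto (fun t => mu2 (B t)) (nhdsWithin t₀ S) (nhds (mu2 (B t₀)))
  simpa using h

lemma inner_le_mu2 (M : Matrix (Fin n) (Fin n) ℝ) (v : EuclideanSpace ℝ (Fin n)) :
    (inner ℝ (Matrix.toEuclideanLin M v) v : ℝ) ≤ mu2 M * ‖v‖ ^ 2 := by
  classical
  have expand : ∀ P : Matrix (Fin n) (Fin n) ℝ,
      (inner ℝ (Matrix.toEuclideanLin P v) v : ℝ) = ∑ i, ∑ j, P i j * v j * v i := by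
    intro P
    rw [inner_eucl]
    refine Finset.sum_congr rfl fun i _ => ?_
    rw [toEuclideanLin_app, Finset.sum_mul]
  have htrans : (inner ℝ (Matrix.toEuclideanLin Mᵀ v) v : ℝ)
      = inner ℝ (Matrix.toEuclideanLin M v) v := by
    rw [expand, expand, Finset.sum_comm]
    refine Finset.sum_congr rfl fun i _ => Finset.sum_congr rfl fun j _ => ?_
    rw [Matrix.transpose_apply]
    ring
  have hsum : (inner ℝ (Matrix.toEuclideanLin (M + Mᵀ) v) v : ℝ)
      = inner ℝ (Matrix.toEuclideanLin M v) v + inner ℝ (Matrix.toEuclideanLin Mᵀ v) v := by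
    rw [map_add]
    simp [inner_add_left]
  have h := rayleigh_le (M + Mᵀ) (add_transpose_isHermitian M) v
  rw [hsum, htrans] at h
  unfold mu2
  linarith

end MyAux

/-- variation-of-constants estimate in terms of the logarithmic norm
for the perturbed system `ẋ = A(t)x + w(x,t)` with `‖w(x,t)‖ ≤ g(t)`. -/
theorem stmt_3 (n : ℕ) (hn : 1 ≤ n)
    (A : ℝ → Matrix (Fin n) (Fin n) ℝ)
    (hA : ContinuousOn A (Set.Ici (0 : ℝ)))
    (w : EuclideanSpace ℝ (Fin n) → ℝ → EuclideanSpace ℝ (Fin n))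
    (hw : ContinuousOn (fun p : EuclideanSpace ℝ (Fin n) × ℝ => w p.1 p.2)
      (Set.univ ×ˢ Set.Ici (0 : ℝ)))
    (g : ℝ → ℝ)
    (hg : ContinuousOn g (Set.Ici (0 : ℝ)))
    (hg0 : ∀ t : ℝ, 0 ≤ t → 0 ≤ g t)
    (hbound : ∀ (y : EuclideanSpace ℝ (Fin n)) (t : ℝ), 0 ≤ t → ‖w y t‖ ≤ g t)
    (x : ℝ → EuclideanSpace ℝ (Fin n))
    (hx : ∀ t : ℝ, 0 ≤ t →
      HasDerivAt x (Matrix.toEuclideanLin (A t) (x t) + w (x t) t) t) :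
    ∀ t : ℝ, 0 ≤ t →
      ‖x t‖ ≤ ‖x 0‖ * Real.exp (∫ s in (0:ℝ)..t, mu2 (A s)) +
        ∫ τ in (0:ℝ)..t, Real.exp (∫ s in τ..t, mu2 (A s)) * g τ := by
  haveI : Nonempty (Fin n) := ⟨⟨0, hn⟩⟩
  intro T hT
  -- extended coefficient functions
  have hmaxcont : Continuous fun s : ℝ => max s 0 := continuous_id.max continuous_const
  have hmaxmem : ∀ s : ℝ, max s 0 ∈ Set.Ici (0 : ℝ) := fun s => le_max_right s 0
  set μ : ℝ → ℝ := fun s => mu2 (A (max s 0)) with hμdef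
  set gg : ℝ → ℝ := fun s => g (max s 0) with hggdef
  have hμcont : Continuous μ := by
    have h1 : ContinuousOn (fun s : ℝ => A (max s 0)) Set.univ :=
      hA.comp hmaxcont.continuousOn fun s _ => hmaxmem s
    have h2 := MyAux.continuousOn_mu2comp (S := Set.univ) h1
    exact continuousOn_univ.1 h2
  have hggcont : Continuous gg := by
    have h1 : ContinuousOn gg Set.univ := hg.comp hmaxcont.continuousOn fun s _ => hmaxmem s
    exact continuousOn_univ.1 h1
  have hggnonneg : ∀ s, 0 ≤ gg s := fun s => hg0 _ (hmaxmem s)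
  have hμeq : ∀ s : ℝ, 0 ≤ s → μ s = mu2 (A s) := fun s hs => by
    simp only [hμdef, max_eq_left hs]
  have hggeq : ∀ s : ℝ, 0 ≤ s → gg s = g s := fun s hs => by
    simp only [hggdef, max_eq_left hs]
  -- integral functions
  set F : ℝ → ℝ := fun t => ∫ s in (0:ℝ)..t, μ s with hFdef
  have hF : ∀ t, HasDerivAt F (μ t) t := fun t =>
    intervalIntegral.integral_hasDerivAt_right (hμcont.intervalIntegrable 0 t)
      (hμcont.stronglyMeasurableAtFilter _ _) hμcont.continuousAt
  have hFcont : Continuous F := continuous_iff_continuousAt.2 fun t => (hF t).continuousAt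
  have hGint : Continuous fun τ => Real.exp (-F τ) * gg τ :=
    (Real.continuous_exp.comp hFcont.neg).mul hggcont
  set G : ℝ → ℝ := fun t => ∫ τ in (0:ℝ)..t, Real.exp (-F τ) * gg τ with hGdef
  have hG : ∀ t, HasDerivAt G (Real.exp (-F t) * gg t) t := fun t =>
    intervalIntegral.integral_hasDerivAt_right (hGint.intervalIntegrable 0 t)
      (hGint.stronglyMeasurableAtFilter _ _) hGint.continuousAt
  set H : ℝ → ℝ := fun t => ∫ τ in (0:ℝ)..t, Real.exp (-F τ) with hHdef
  have hHint : Continuous fun τ : ℝ => Real.exp (-F τ) := Real.continuous_exp.comp hFcont.neg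
  have hH : ∀ t, HasDerivAt H (Real.exp (-F t)) t := fun t =>
    intervalIntegral.integral_hasDerivAt_right (hHint.intervalIntegrable 0 t)
      (hHint.stronglyMeasurableAtFilter _ _) hHint.continuousAt
  have hF0 : F 0 = 0 := intervalIntegral.integral_same
  have hG0 : G 0 = 0 := intervalIntegral.integral_same
  have hH0 : H 0 = 0 := intervalIntegral.integral_same
  -- the key per-ε bound
  have main : ∀ ε : ℝ, 0 < ε →
      ‖x T‖ ≤ Real.exp (F T) * (‖x 0‖ + ε + (G T + ε * H T)) := by
    intro ε hε
    have hB : ∀ t, HasDerivAt (fun t => Real.exp (F t) * (‖x 0‖ + ε + (G t + ε * H t)))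
        (μ t * (Real.exp (F t) * (‖x 0‖ + ε + (G t + ε * H t))) + (gg t + ε)) t := by
      intro t
      have h1 : HasDerivAt (fun t => Real.exp (F t)) (Real.exp (F t) * μ t) t := (hF t).exp
      have h2 : HasDerivAt (fun t => ‖x 0‖ + ε + (G t + ε * H t))
          (Real.exp (-F t) * gg t + ε * Real.exp (-F t)) t :=
        ((hG t).add ((hH t).const_mul ε)).const_add _
      have h3 := h1.mul h2
      have hexp : Real.exp (F t) * Real.exp (-F t) = 1 := by
        rw [← Real.exp_add]; simp
      refine h3.congr_deriv ?_
      linear_combination (gg t + ε) * hexp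
    have hfcont : ContinuousOn (fun t => ‖x t‖) (Set.Icc 0 T) := fun t ht =>
      ((hx t ht.1).continuousAt.continuousWithinAt).norm
    have hslope : ∀ t ∈ Set.Ico (0:ℝ) T, ∀ r, (μ t * ‖x t‖ + gg t) < r →
        ∃ᶠ z in nhdsWithin t (Set.Ioi t), slope (fun t => ‖x t‖) t z < r := by
      intro t ht r hr
      have ht0 : (0:ℝ) ≤ t := ht.1
      have hxd := hx t ht0
      set v := Matrix.toEuclideanLin (A t) (x t) + w (x t) t with hvdef
      by_cases hzero : x t = 0
      · have h1 : Tendsto (slope x t) (nhdsWithin t {t}ᶜ) (nhds v) :=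
          hasDerivAt_iff_tendsto_slope.1 hxd
        have h2 : Tendsto (fun z => ‖slope x t z‖) (nhdsWithin t (Set.Ioi t)) (nhds ‖v‖) :=
          h1.norm.mono_left (nhdsWithin_mono t fun z hz => Set.mem_compl_singleton_iff.2 (ne_of_gt hz))
        have hvr : ‖v‖ < r := by
          have hv1 : v = w (x t) t := by
            rw [hvdef, hzero]; simp
          have hv2 : ‖v‖ ≤ gg t := by
            rw [hv1, hggeq t ht0]; exact hbound _ t ht0
          have : μ t * ‖x t‖ + gg t = gg t := by rw [hzero]; simp
          linarith
        have hev : ∀ᶠ z in nhdsWithin t (Set.Ioi t), ‖slope x t z‖ < r :=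
          h2.eventually_lt_const hvr
        refine ((hev.and eventually_mem_nhdsWithin).frequently).mono ?_
        rintro z ⟨h1', h2'⟩
        have hzt : t < z := h2'
        have hs1 : slope (fun t => ‖x t‖) t z = (z - t)⁻¹ * ‖x z‖ := by
          rw [slope_def_field, hzero, norm_zero, sub_zero, div_eq_inv_mul]
        have hs2 : ‖slope x t z‖ = (z - t)⁻¹ * ‖x z‖ := by
          rw [slope_def_module, hzero, sub_zero, norm_smul,
            Real.norm_eq_abs, abs_inv, abs_of_pos (sub_pos.2 hzt)]
        rw [hs1, ← hs2]
        exact h1'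
      · -- differentiable case
        have hnz : ‖x t‖ ≠ 0 := norm_ne_zero_iff.2 hzero
        have hpos : (0:ℝ) < ‖x t‖ := (norm_nonneg _).lt_of_ne (Ne.symm hnz)
        have hipos : (0:ℝ) < inner ℝ (x t) (x t) := by
          rw [real_inner_self_eq_norm_sq]
          exact pow_pos hpos 2
        have hq : HasDerivAt (fun t => (inner ℝ (x t) (x t) : ℝ))
            (inner ℝ (x t) v + inner ℝ v (x t)) t := hxd.inner ℝ hxd
        have hfder : HasDerivAt (fun t => ‖x t‖) ((inner ℝ v (x t) : ℝ) / ‖x t‖) t := by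
          have hcomp := (Real.hasDerivAt_sqrt (ne_of_gt hipos)).comp t hq
          have hfun : (fun t => Real.sqrt (inner ℝ (x t) (x t) : ℝ)) = fun t => ‖x t‖ := by
            funext s
            rw [real_inner_self_eq_norm_sq, Real.sqrt_sq (norm_nonneg _)]
          rw [Function.comp_def] at hcomp
          rw [hfun] at hcomp
          refine hcomp.congr_deriv ?_
          have hsq : Real.sqrt (inner ℝ (x t) (x t) : ℝ) = ‖x t‖ := by
            rw [real_inner_self_eq_norm_sq, Real.sqrt_sq (norm_nonneg _)]
          rw [hsq, real_inner_comm (x t) v]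
          field_simp
          ring
        have hd : (inner ℝ v (x t) : ℝ) / ‖x t‖ ≤ μ t * ‖x t‖ + gg t := by
          have h1 : (inner ℝ (Matrix.toEuclideanLin (A t) (x t)) (x t) : ℝ)
              ≤ mu2 (A t) * ‖x t‖ ^ 2 := MyAux.inner_le_mu2 _ _
          have h2 : (inner ℝ (w (x t) t) (x t) : ℝ) ≤ gg t * ‖x t‖ := by
            refine (real_inner_le_norm _ _).trans ?_
            refine mul_le_mul_of_nonneg_right ?_ (norm_nonneg _)
            rw [hggeq t ht0]; exact hbound _ _ ht0
          have hvsplit : (inner ℝ v (x t) : ℝ)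
              = inner ℝ (Matrix.toEuclideanLin (A t) (x t)) (x t) + inner ℝ (w (x t) t) (x t) :=
            inner_add_left _ _ _
          rw [div_le_iff₀ hpos, hμeq t ht0, hvsplit]
          nlinarith [h1, h2]
        exact hfder.hasDerivWithinAt.liminf_right_slope_le (lt_of_le_of_lt hd hr)
    have ha : ‖x 0‖ ≤ Real.exp (F 0) * (‖x 0‖ + ε + (G 0 + ε * H 0)) := by
      rw [hF0, hG0, hH0, Real.exp_zero]
      nlinarith
    have hcontact : ∀ t ∈ Set.Ico (0:ℝ) T,
        ‖x t‖ = Real.exp (F t) * (‖x 0‖ + ε + (G t + ε * H t)) →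
        μ t * ‖x t‖ + gg t
          < μ t * (Real.exp (F t) * (‖x 0‖ + ε + (G t + ε * H t))) + (gg t + ε) := by
      intro t _ heq
      rw [heq]
      linarith
    have := image_le_of_liminf_slope_right_lt_deriv_boundary hfcont hslope ha hB hcontact
      (Set.right_mem_Icc.2 hT)
    exact this
  -- identify the statement's RHS
  have hFT : (∫ s in (0:ℝ)..T, mu2 (A s)) = F T := by
    refine intervalIntegral.integral_congr fun s hs => ?_
    rw [Set.uIcc_of_le hT] at hs
    exact (hμeq s hs.1).symm
  have hint2 : (∫ τ in (0:ℝ)..T, Real.exp (∫ s in τ..T, mu2 (A s)) * g τ)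
      = Real.exp (F T) * G T := by
    have h1 : Set.EqOn (fun τ => Real.exp (∫ s in τ..T, mu2 (A s)) * g τ)
        (fun τ => Real.exp (F T) * (Real.exp (-F τ) * gg τ)) (Set.uIcc (0:ℝ) T) := by
      intro τ hτ
      rw [Set.uIcc_of_le hT] at hτ
      have hτ0 : (0:ℝ) ≤ τ := hτ.1
      have hμτ : (∫ s in τ..T, mu2 (A s)) = F T - F τ := by
        have hcong : (∫ s in τ..T, mu2 (A s)) = ∫ s in τ..T, μ s :=
          intervalIntegral.integral_congr fun s hs => by
            rw [Set.uIcc_of_le hτ.2] at hs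
            exact (hμeq s (le_trans hτ0 hs.1)).symm
        rw [hcong, hFdef]
        exact (intervalIntegral.integral_interval_sub_left
          (hμcont.intervalIntegrable 0 T) (hμcont.intervalIntegrable 0 τ)).symm
      show Real.exp (∫ s in τ..T, mu2 (A s)) * g τ
          = Real.exp (F T) * (Real.exp (-F τ) * gg τ)
      rw [hμτ, hggeq τ hτ0, sub_eq_add_neg, Real.exp_add]
      ring
    rw [intervalIntegral.integral_congr h1, intervalIntegral.integral_const_mul]
  rw [hFT, hint2]
  have hHnn : 0 ≤ H T :=
    intervalIntegral.integral_nonneg hT fun τ _ => (Real.exp_pos _).le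
  set C : ℝ := Real.exp (F T) * (1 + H T) with hC
  have hCpos : 0 < C := mul_pos (Real.exp_pos _) (by linarith)
  refine le_of_forall_pos_le_add fun ε hε => ?_
  have hmain := main (ε / C) (div_pos hε hCpos)
  have expand : Real.exp (F T) * (‖x 0‖ + ε / C + (G T + ε / C * H T))
      = ‖x 0‖ * Real.exp (F T) + Real.exp (F T) * G T + ε / C * C := by
    rw [hC]; ring
  rw [expand, div_mul_cancel₀ _ (ne_of_gt hCpos)] at hmain
  linarith
end

section
/- Let μ : [0,∞) → ℝ and g : [0,∞) → [0,∞) be continuous functions such that (1) ∫₀^t μ(s) ds → -∞ as t → ∞; (2) there exists T ≥ 0 with μ(t) < 0 for all t ≥ T; and (3) g(t)/μ(t) → 0 as t → ∞. Then ∫₀^t exp(∫_τ^t μ(s) ds) · g(τ) dτ → 0 as t → ∞. -/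
open Filter MeasureTheory

/-- the L'Hospital step: if `∫₀ᵗ μ → -∞`, `μ(t) < 0` eventually and
`g(t)/μ(t) → 0`, then the convolution term `∫₀ᵗ exp(∫_τ^t μ) g(τ) dτ → 0`. -/
theorem stmt_4 (μ g : ℝ → ℝ)
    (hμc : ContinuousOn μ (Set.Ici (0 : ℝ)))
    (hgc : ContinuousOn g (Set.Ici (0 : ℝ)))
    (hg0 : ∀ t : ℝ, 0 ≤ t → 0 ≤ g t)
    (hint : Tendsto (fun t : ℝ => ∫ s in (0:ℝ)..t, μ s) atTop atBot)
    (hneg : ∃ T : ℝ, 0 ≤ T ∧ ∀ t : ℝ, T ≤ t → μ t < 0)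
    (hratio : Tendsto (fun t : ℝ => g t / μ t) atTop (nhds 0)) :
    Tendsto (fun t : ℝ => ∫ τ in (0:ℝ)..t, Real.exp (∫ s in τ..t, μ s) * g τ)
      atTop (nhds 0) := by
  obtain ⟨T, hT0, hTneg⟩ := hneg
  set F : ℝ → ℝ := fun t => ∫ s in (0:ℝ)..t, μ s with hFdef
  have subIcc : ∀ a b : ℝ, 0 ≤ a → 0 ≤ b → Set.uIcc a b ⊆ Set.Ici 0 := by
    intro a b ha hb x hx
    exact le_trans (le_min ha hb) hx.1
  have hμint : ∀ a b : ℝ, 0 ≤ a → 0 ≤ b → IntervalIntegrable μ volume a b :=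
    fun a b ha hb => (hμc.mono (subIcc a b ha hb)).intervalIntegrable
  have hFc : ∀ b : ℝ, 0 ≤ b → ContinuousOn F (Set.Icc 0 b) := by
    intro b hb
    have hμI : IntegrableOn μ (Set.uIcc 0 b) volume :=
      (hμc.mono (subIcc 0 b le_rfl hb)).integrableOn_compact isCompact_uIcc
    have := intervalIntegral.continuousOn_primitive_interval hμI
    rwa [Set.uIcc_of_le hb] at this
  set G : ℝ → ℝ := fun τ => Real.exp (-(F τ)) * g τ with hGdef
  have hGc : ∀ b : ℝ, 0 ≤ b → ContinuousOn G (Set.Icc 0 b) := by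
    intro b hb
    exact (Real.continuous_exp.comp_continuousOn (hFc b hb).neg).mul
      (hgc.mono (fun x hx => hx.1))
  have hGint : ∀ a b : ℝ, 0 ≤ a → a ≤ b → IntervalIntegrable G volume a b := by
    intro a b ha hab
    have hb : (0:ℝ) ≤ b := le_trans ha hab
    apply ContinuousOn.intervalIntegrable
    apply (hGc b hb).mono
    rw [Set.uIcc_of_le hab]
    exact Set.Icc_subset_Icc ha le_rfl
  have hG0 : ∀ τ : ℝ, 0 ≤ τ → 0 ≤ G τ := fun τ hτ =>
    mul_nonneg (Real.exp_nonneg _) (hg0 τ hτ)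
  have key : ∀ t : ℝ, 0 ≤ t →
      (∫ τ in (0:ℝ)..t, Real.exp (∫ s in τ..t, μ s) * g τ)
        = Real.exp (F t) * ∫ τ in (0:ℝ)..t, G τ := by
    intro t ht
    rw [← intervalIntegral.integral_const_mul]
    apply intervalIntegral.integral_congr
    intro τ hτ
    rw [Set.uIcc_of_le ht] at hτ
    have hτ0 : 0 ≤ τ := hτ.1
    have hsub : (∫ s in τ..t, μ s) = F t - F τ :=
      (intervalIntegral.integral_interval_sub_left (hμint 0 t le_rfl ht)
        (hμint 0 τ le_rfl hτ0)).symm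
    simp only [hGdef]
    rw [hsub, sub_eq_add_neg, Real.exp_add, mul_assoc]
  have hFbot : Tendsto (fun t => Real.exp (F t)) atTop (nhds 0) :=
    Real.tendsto_exp_atBot.comp hint
  have main : Tendsto (fun t : ℝ => Real.exp (F t) * ∫ τ in (0:ℝ)..t, G τ)
      atTop (nhds 0) := by
    rw [Metric.tendsto_atTop]
    intro ε hε
    obtain ⟨T₁', hT₁'⟩ := Metric.tendsto_atTop.mp hratio (ε/2) (by positivity)
    set T₁ : ℝ := max T₁' (T + 1) with hT₁def
    have hT₁T : T ≤ T₁ := le_trans (by linarith) (le_max_right _ _)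
    have hT₁pos : (0:ℝ) < T₁ := lt_of_lt_of_le (by linarith) (le_max_right _ _)
    have hgbound : ∀ τ : ℝ, T₁ ≤ τ → g τ ≤ ε/2 * (-μ τ) := by
      intro τ hτ
      have hμτ : μ τ < 0 := hTneg τ (le_trans hT₁T hτ)
      have h1 := hT₁' τ (le_trans (le_max_left _ _) hτ)
      rw [Real.dist_eq, sub_zero] at h1
      have hτ0 : 0 ≤ τ := le_trans hT₁pos.le hτ
      have habs : |g τ / μ τ| = g τ / (-μ τ) := by
        rw [abs_div, abs_of_nonneg (hg0 τ hτ0), abs_of_neg hμτ]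
      rw [habs] at h1
      have := (div_lt_iff₀ (by linarith : (0:ℝ) < -μ τ)).mp h1
      linarith
    set C : ℝ := ∫ τ in (0:ℝ)..T₁, G τ with hCdef
    have hC0 : 0 ≤ C :=
      intervalIntegral.integral_nonneg hT₁pos.le (fun τ hτ => hG0 τ hτ.1)
    have hFd : ∀ τ : ℝ, 0 < τ →
        HasDerivAt (fun u => Real.exp (-(F u))) (-μ τ * Real.exp (-(F τ))) τ := by
      intro τ hτ
      have hct : ContinuousAt μ τ := hμc.continuousAt (Ici_mem_nhds hτ)
      have hmeas : StronglyMeasurableAtFilter μ (nhds τ) volume :=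
        ContinuousOn.stronglyMeasurableAtFilter isOpen_Ioi
          (hμc.mono Set.Ioi_subset_Ici_self) τ hτ
      have hFd1 : HasDerivAt F (μ τ) τ :=
        intervalIntegral.integral_hasDerivAt_right (hμint 0 τ le_rfl hτ.le) hmeas hct
      have h2 := (hFd1.neg).exp
      convert h2 using 1
      · rfl
      · exact mul_comm _ _
    have hderivcont : ∀ t : ℝ, T₁ ≤ t →
        IntervalIntegrable (fun τ => -μ τ * Real.exp (-(F τ))) volume T₁ t := by
      intro t ht
      have h0t : (0:ℝ) ≤ t := le_trans hT₁pos.le ht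
      apply ContinuousOn.intervalIntegrable
      have hsub2 : Set.uIcc T₁ t ⊆ Set.Icc 0 t := by
        rw [Set.uIcc_of_le ht]
        exact Set.Icc_subset_Icc hT₁pos.le le_rfl
      exact ((hμc.mono (fun x hx => (hsub2 hx).1)).neg).mul
        (Real.continuous_exp.comp_continuousOn ((hFc t h0t).mono hsub2).neg)
    have hexpint : ∀ t : ℝ, T₁ ≤ t →
        (∫ τ in T₁..t, -μ τ * Real.exp (-(F τ)))
          = Real.exp (-(F t)) - Real.exp (-(F T₁)) := by
      intro t ht
      apply intervalIntegral.integral_eq_sub_of_hasDerivAt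
      · intro τ hτ
        rw [Set.uIcc_of_le ht] at hτ
        exact hFd τ (lt_of_lt_of_le hT₁pos hτ.1)
      · exact hderivcont t ht
    have hhead : Tendsto (fun t => Real.exp (F t) * C) atTop (nhds 0) := by
      simpa using hFbot.mul_const C
    obtain ⟨N₁, hN₁⟩ := Metric.tendsto_atTop.mp hhead (ε/2) (by positivity)
    refine ⟨max N₁ T₁, ?_⟩
    intro t ht
    have htT₁ : T₁ ≤ t := le_trans (le_max_right _ _) ht
    have ht0 : (0:ℝ) ≤ t := le_trans hT₁pos.le htT₁
    have hsplit : (∫ τ in (0:ℝ)..t, G τ) = C + ∫ τ in T₁..t, G τ :=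
      (intervalIntegral.integral_add_adjacent_intervals
        (hGint 0 T₁ le_rfl hT₁pos.le) (hGint T₁ t hT₁pos.le htT₁)).symm
    have htail : (∫ τ in T₁..t, G τ)
        ≤ ε/2 * (Real.exp (-(F t)) - Real.exp (-(F T₁))) := by
      have hmono : (∫ τ in T₁..t, G τ)
          ≤ ∫ τ in T₁..t, ε/2 * (-μ τ * Real.exp (-(F τ))) := by
        apply intervalIntegral.integral_mono_on htT₁ (hGint T₁ t hT₁pos.le htT₁)
          ((hderivcont t htT₁).const_mul (ε/2))
        intro τ hτ
        have hτT₁ : T₁ ≤ τ := hτ.1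
        calc G τ = Real.exp (-(F τ)) * g τ := rfl
          _ ≤ Real.exp (-(F τ)) * (ε/2 * (-μ τ)) :=
              mul_le_mul_of_nonneg_left (hgbound τ hτT₁) (Real.exp_nonneg _)
          _ = ε/2 * (-μ τ * Real.exp (-(F τ))) := by ring
      rwa [intervalIntegral.integral_const_mul, hexpint t htT₁] at hmono
    have htail0 : 0 ≤ ∫ τ in T₁..t, G τ :=
      intervalIntegral.integral_nonneg htT₁
        (fun τ hτ => hG0 τ (le_trans hT₁pos.le hτ.1))
    rw [Real.dist_eq, sub_zero]
    have hh1 := hN₁ t (le_trans (le_max_left _ _) ht)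
    rw [Real.dist_eq, sub_zero] at hh1
    have hexppos : (0:ℝ) < Real.exp (F t) := Real.exp_pos _
    have hheadlt : Real.exp (F t) * C < ε/2 := lt_of_abs_lt hh1
    have hinv : Real.exp (F t) * Real.exp (-(F t)) = 1 := by
      rw [← Real.exp_add]; simp
    have hposT₁ : (0:ℝ) < Real.exp (F t) * Real.exp (-(F T₁)) :=
      mul_pos hexppos (Real.exp_pos _)
    have key2 : Real.exp (F t) * (∫ τ in T₁..t, G τ) ≤ ε/2 := by
      have h3 : Real.exp (F t) * (∫ τ in T₁..t, G τ)
          ≤ Real.exp (F t) * (ε/2 * (Real.exp (-(F t)) - Real.exp (-(F T₁)))) :=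
        mul_le_mul_of_nonneg_left htail hexppos.le
      nlinarith
    rw [hsplit, abs_of_nonneg (mul_nonneg hexppos.le (by linarith))]
    rw [mul_add]
    linarith
  refine Tendsto.congr' ?_ main
  filter_upwards [eventually_ge_atTop (0:ℝ)] with t ht
  exact (key t ht).symm
end

section
/- Let n ≥ 1, let A : [0,∞) → ℝ^{n×n} be continuous, and assume the zero solution of ẋ = A(t)x is globally uniformly exponentially stable, i.e. there exist K ≥ 1 and λ > 0 such that every differentiable x : [0,∞) → ℝⁿ with x′(t) = A(t)x(t) satisfies ‖x(t)‖ ≤ K·e^{-λ(t-τ)}·‖x(τ)‖ for all 0 ≤ τ ≤ t. Let h : [0,∞) → ℝⁿ be continuous with ∫_t^{t+1} ‖h(s)‖ ds → 0 as t → ∞ (i.e. h ∈ 𝒜𝒟). Then every differentiable x : [0,∞) → ℝⁿ with x′(t) = A(t)x(t) + h(t) for all t ≥ 0 satisfies ‖x(t)‖ → 0 as t → ∞. -/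
open Filter Matrix Set

set_option linter.unusedSectionVars false
set_option linter.unusedVariables false

section ODE
variable {F : Type*} [NormedAddCommGroup F] [NormedSpace ℝ F] [CompleteSpace F]

/-- Solution property of a linear ODE on a closed interval. -/
def SolOn (B : ℝ → F →L[ℝ] F) (a b : ℝ) (y : ℝ → F) : Prop :=
  ∀ t ∈ Set.Icc a b, HasDerivWithinAt y (B t (y t)) (Set.Icc a b) t

lemma solOn_local (B : ℝ → F →L[ℝ] F) (hB : Continuous B) {M a b t₀ : ℝ}
    (hM : ∀ t ∈ Set.Icc a b, ‖B t‖ ≤ M) (hM0 : 0 ≤ M) (ht₀ : t₀ ∈ Set.Icc a b)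
    (hstep : max (b - t₀) (t₀ - a) ≤ 1/(2*(M+1))) (x₀ : F) :
    ∃ y, y t₀ = x₀ ∧ SolOn B a b y := by
  have hM1 : (0:ℝ) < M + 1 := by linarith
  have hpl : IsPicardLindelof (fun t x => B t x) (⟨t₀, ht₀⟩ : Icc a b) x₀
      ⟨‖x₀‖ + 1, by positivity⟩ 0 ⟨M * (2 * ‖x₀‖ + 1), mul_nonneg hM0 (by positivity)⟩
      (M+1).toNNReal := by
    constructor
    · intro t ht
      have : LipschitzWith (M+1).toNNReal (B t) := by
        refine (B t).lipschitz.weaken ?_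
        rw [← NNReal.coe_le_coe]
        have h1 : (‖B t‖₊ : ℝ) = ‖B t‖ := rfl
        rw [h1, Real.coe_toNNReal _ (by linarith)]
        linarith [hM t ht]
      exact this.lipschitzOnWith
    · intro x _
      exact (hB.clm_apply continuous_const).continuousOn
    · intro t ht x hx
      have h1 : ‖x‖ ≤ ‖x₀‖ + (‖x₀‖ + 1) := by
        have := mem_closedBall_iff_norm.mp hx
        have : ‖x‖ - ‖x₀‖ ≤ ‖x₀‖ + 1 := (norm_sub_norm_le _ _).trans this
        linarith
      calc ‖B t x‖ ≤ ‖B t‖ * ‖x‖ := (B t).le_opNorm x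
        _ ≤ M * (2 * ‖x₀‖ + 1) := by
            apply mul_le_mul (hM t ht) (by linarith) (norm_nonneg _) hM0
    · rw [NNReal.coe_zero, sub_zero]
      show M * (2 * ‖x₀‖ + 1) * max (b - t₀) (t₀ - a) ≤ ‖x₀‖ + 1
      have hmax : max (b - t₀) (t₀ - a) ≤ 1/(2*(M+1)) := hstep
      have hmn : 0 ≤ max (b - t₀) (t₀ - a) := le_max_of_le_left (by linarith [ht₀.2])
      calc M * (2 * ‖x₀‖ + 1) * max (b - t₀) (t₀ - a)
          ≤ (M+1) * (2 * ‖x₀‖ + 2) * (1/(2*(M+1))) := by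
            apply mul_le_mul _ hmax hmn (by positivity)
            apply mul_le_mul (by linarith) (by linarith) (by positivity) (by linarith)
        _ = ‖x₀‖ + 1 := by field_simp
  obtain ⟨y, hy0, hy⟩ := hpl.exists_eq_forall_mem_Icc_hasDerivWithinAt₀
  exact ⟨y, hy0, hy⟩

lemma solOn_glue {B : ℝ → F →L[ℝ] F} {a b b' : ℝ} {y z : ℝ → F}
    (hab : a ≤ b) (hbb' : b ≤ b') (hy : SolOn B a b y) (hz : SolOn B b b' z)
    (hyz : y b = z b) :
    ∃ g, SolOn B a b' g ∧ Set.EqOn g y (Set.Icc a b) := by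
  classical
  refine ⟨fun t => if t ≤ b then y t else z t, ?_, ?_⟩
  · intro t ht
    set g : ℝ → F := fun t => if t ≤ b then y t else z t with hg
    have hgy : EqOn g y (Icc a b) := fun u hu => by simp [hg, hu.2]
    have hgz : EqOn g z (Icc b b') := by
      intro u hu
      rcases lt_or_eq_of_le hu.1 with hlt | heq
      · simp [hg, not_le.mpr hlt]
      · simp [hg, ← heq, hyz]
    have h1 : HasDerivWithinAt g (B t (g t)) (Icc a b) t := by
      by_cases htb : t ∈ Icc a b
      · have h0 := (hy t htb).congr hgy (hgy htb)
        have hgt : g t = y t := hgy htb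
        rw [hgt]; exact h0
      · have hcl : t ∉ closure (Icc a b) := by rw [closure_Icc]; exact htb
        exact HasFDerivWithinAt.of_notMem_closure hcl
    have h2 : HasDerivWithinAt g (B t (g t)) (Icc b b') t := by
      by_cases htb : t ∈ Icc b b'
      · have h0 := (hz t htb).congr hgz (hgz htb)
        have hgt : g t = z t := hgz htb
        rw [hgt]; exact h0
      · have hcl : t ∉ closure (Icc b b') := by rw [closure_Icc]; exact htb
        exact HasFDerivWithinAt.of_notMem_closure hcl
    have := h1.union h2
    rwa [Set.Icc_union_Icc_eq_Icc hab hbb'] at this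
  · intro u hu; simp [hu.2]

lemma solOn_extend_right_one {B : ℝ → F →L[ℝ] F} (hB : Continuous B)
    {a b : ℝ} {y : ℝ → F} (hy : SolOn B a b y) (hab : a ≤ b) :
    ∃ y', SolOn B a (b + 1) y' ∧ Set.EqOn y' y (Set.Icc a b) := by
  obtain ⟨C, hC⟩ := isCompact_Icc.exists_bound_of_continuousOn
    (hB.continuousOn : ContinuousOn B (Set.Icc b (b+1)))
  set M := max C 0 with hMdef
  have hM0 : 0 ≤ M := le_max_right _ _
  have hM : ∀ t ∈ Set.Icc b (b+1), ‖B t‖ ≤ M := fun t ht => (hC t ht).trans (le_max_left _ _)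
  have hM1 : (0:ℝ) < M + 1 := by linarith
  set δ := 1/(2*(M+1)) with hδdef
  have hδ : 0 < δ := by positivity
  have claim : ∀ j : ℕ, ∃ y', SolOn B a (min (b + j*δ) (b+1)) y' ∧ EqOn y' y (Icc a b) := by
    intro j
    induction j with
    | zero =>
      refine ⟨y, ?_, fun _ _ => rfl⟩
      have : min (b + (0:ℕ)*δ) (b+1) = b := by
        rw [min_eq_left] <;> simp
      rwa [this]
    | succ j ih =>
      obtain ⟨y', hy', hEq⟩ := ih
      set c := min (b + j*δ) (b+1) with hcdef
      by_cases hcb : b + 1 ≤ b + j*δ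
      · have h1 : c = b + 1 := min_eq_right hcb
        have h2 : min (b + (j+1:ℕ)*δ) (b+1) = b + 1 := by
          apply min_eq_right
          push_cast
          nlinarith [hδ.le]
        refine ⟨y', ?_, hEq⟩
        rw [h2, ← h1]; exact hy'
      · push_neg at hcb
        have h1 : c = b + j*δ := min_eq_left hcb.le
        set c' := min (b + (j+1:ℕ)*δ) (b+1) with hc'def
        have hjδ : 0 ≤ (j:ℝ) * δ := mul_nonneg (Nat.cast_nonneg j) hδ.le
        have hcc' : c ≤ c' := by
          refine le_min ?_ (min_le_right _ _)
          rw [h1]; push_cast; nlinarith [hδ.le]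
        have hbc : b ≤ c := le_min (by linarith) (by linarith)
        have hc'b1 : c' ≤ b + 1 := min_le_right _ _
        have hc'c : c' - c ≤ δ := by
          have : c' ≤ b + (j+1:ℕ)*δ := min_le_left _ _
          rw [h1]; push_cast at this ⊢; linarith
        -- local solution on [c, c'] starting at (c, y' c)
        obtain ⟨z, hz0, hz⟩ := solOn_local B hB
          (fun t ht => hM t ⟨hbc.trans ht.1, ht.2.trans hc'b1⟩) hM0
          (⟨le_refl c, hcc'⟩ : c ∈ Icc c c')
          (by
            rw [max_le_iff]
            constructor
            · rw [← hδdef]; linarith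
            · simp [hδdef]; positivity)
          (y' c)
        obtain ⟨g, hg, hgEq⟩ := solOn_glue (hab.trans hbc) hcc' hy' hz hz0.symm
        refine ⟨g, hg, ?_⟩
        intro u hu
        have hu' : u ∈ Icc a c := ⟨hu.1, hu.2.trans hbc⟩
        exact (hgEq hu').trans (hEq hu)
  obtain ⟨j, hj⟩ : ∃ j : ℕ, 1 ≤ (j:ℝ) * δ := by
    refine ⟨⌈1/δ⌉₊, ?_⟩
    have := Nat.le_ceil (1/δ)
    calc (1:ℝ) = (1/δ) * δ := by field_simp
      _ ≤ (⌈1/δ⌉₊ : ℝ) * δ := by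
          apply mul_le_mul_of_nonneg_right this hδ.le
  obtain ⟨y', hy', hEq⟩ := claim j
  have : min (b + j*δ) (b+1) = b + 1 := min_eq_right (by linarith)
  rw [this] at hy'
  exact ⟨y', hy', hEq⟩

lemma solOn_neg {B : ℝ → F →L[ℝ] F} {a b : ℝ} {y : ℝ → F} (hy : SolOn B a b y) :
    SolOn (fun t => -(B (-t))) (-b) (-a) (fun t => y (-t)) := by
  intro t ht
  have hmem : -t ∈ Icc a b := by
    constructor <;> [linarith [ht.2]; linarith [ht.1]]
  have hmaps : MapsTo (fun u : ℝ => -u) (Icc (-b) (-a)) (Icc a b) := by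
    intro u hu
    simp only [Set.mem_Icc] at hu ⊢
    constructor <;> linarith
  have hneg : HasDerivWithinAt (fun u : ℝ => -u) (-1) (Icc (-b) (-a)) t :=
    (hasDerivAt_neg t).hasDerivWithinAt
  have := (hy (-t) hmem).scomp t hneg hmaps
  simpa [Function.comp_def] using this

lemma solOn_extend_left_one {B : ℝ → F →L[ℝ] F} (hB : Continuous B)
    {a b : ℝ} {y : ℝ → F} (hy : SolOn B a b y) (hab : a ≤ b) :
    ∃ y', SolOn B (a - 1) b y' ∧ Set.EqOn y' y (Set.Icc a b) := by
  have hB' : Continuous (fun t => -(B (-t))) := (hB.comp continuous_neg).neg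
  obtain ⟨z, hz, hzEq⟩ := solOn_extend_right_one hB' (solOn_neg hy) (by linarith)
  have hz' := solOn_neg hz
  refine ⟨fun t => z (-t), ?_, ?_⟩
  · have harg : ∀ u : ℝ, -(-(B (-(-u)))) = B u := fun u => by simp
    have hI : Set.Icc (-(-a+1)) (-(-b)) = Set.Icc (a-1) b := by congr 1 <;> ring
    intro t ht
    have := hz' t (by rw [hI]; exact ht)
    rw [hI] at this
    simpa using this
  · intro u hu
    have : -u ∈ Icc (-b) (-a) := by
      constructor <;> [linarith [hu.2]; linarith [hu.1]]
    have := hzEq this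
    simpa using this

lemma exists_global_solution (B : ℝ → F →L[ℝ] F) (hB : Continuous B) (s : ℝ) (v : F) :
    ∃ y : ℝ → F, y s = v ∧ ∀ t, HasDerivAt y (B t (y t)) t := by
  set P : ℕ → (ℝ → F) → Prop :=
    fun k y => y s = v ∧ SolOn B (s - k) (s + k) y with hP
  have base : P 0 (fun _ => v) := by
    constructor
    · rfl
    · intro t ht
      simp only [Nat.cast_zero, sub_zero, add_zero] at ht ⊢
      rw [Set.Icc_self] at ht ⊢
      rw [Set.mem_singleton_iff] at ht
      subst ht
      rw [hasDerivWithinAt_iff_tendsto_slope]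
      have hempty : ({t} : Set ℝ) \ {t} = ∅ := by simp
      rw [hempty, nhdsWithin_empty]
      exact tendsto_bot
  have step : ∀ k (y : ℝ → F), P k y →
      ∃ y', P (k+1) y' ∧ Set.EqOn y' y (Set.Icc (s - k) (s + k)) := by
    intro k y hy
    have hk : (0:ℝ) ≤ k := Nat.cast_nonneg k
    obtain ⟨y₁, hy₁, hEq₁⟩ := solOn_extend_right_one hB hy.2 (by linarith)
    obtain ⟨y₂, hy₂, hEq₂⟩ := solOn_extend_left_one hB hy₁ (by linarith)
    have hsmem : s ∈ Icc (s - (k:ℝ)) (s + k) := by constructor <;> linarith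
    have hsub : Icc (s - (k:ℝ)) (s + k) ⊆ Icc (s - k) (s + k + 1) :=
      Icc_subset_Icc le_rfl (by linarith)
    refine ⟨y₂, ⟨?_, ?_⟩, ?_⟩
    · rw [hEq₂ (hsub hsmem), hEq₁ hsmem, hy.1]
    · have h1 : (s - (k+1:ℕ) : ℝ) = (s - k) - 1 := by push_cast; ring
      have h2 : (s + (k+1:ℕ) : ℝ) = (s + k) + 1 := by push_cast; ring
      rw [h1, h2]; exact hy₂
    · intro u hu
      rw [hEq₂ (hsub hu), hEq₁ hu]
  choose f hf1 hf2 using step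
  let seq : ∀ k : ℕ, {y : ℝ → F // P k y} :=
    fun k => Nat.rec ⟨fun _ => v, base⟩ (fun k p => ⟨f k p.1 p.2, hf1 k p.1 p.2⟩) k
  have coher : ∀ k, Set.EqOn (seq (k+1)).1 (seq k).1 (Set.Icc (s - k) (s + k)) :=
    fun k => hf2 k (seq k).1 (seq k).2
  have mono : ∀ k m, k ≤ m →
      Set.EqOn (seq m).1 (seq k).1 (Set.Icc (s - k) (s + k)) := by
    intro k m hkm
    induction m, hkm using Nat.le_induction with
    | base => exact fun u _ => rfl
    | succ m hkm ih =>
      intro u hu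
      have hsub : Icc (s - (k:ℝ)) (s + k) ⊆ Icc (s - m) (s + m) := by
        have : (k:ℝ) ≤ m := Nat.cast_le.mpr hkm
        exact Icc_subset_Icc (by linarith) (by linarith)
      rw [coher m (hsub hu), ih hu]
  have hmemIoo : ∀ t : ℝ, t ∈ Set.Ioo (s - (⌈|t - s|⌉₊ + 1 : ℕ) : ℝ) (s + (⌈|t - s|⌉₊ + 1 : ℕ)) := by
    intro t
    have h1 : |t - s| < (⌈|t - s|⌉₊ + 1 : ℕ) := by
      push_cast
      exact lt_of_le_of_lt (Nat.le_ceil _) (by linarith)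
    rw [abs_lt] at h1
    constructor <;> [linarith [h1.1]; linarith [h1.2]]
  have hmemIcc : ∀ t : ℝ, t ∈ Set.Icc (s - (⌈|t - s|⌉₊ + 1 : ℕ) : ℝ) (s + (⌈|t - s|⌉₊ + 1 : ℕ)) :=
    fun t => Ioo_subset_Icc_self (hmemIoo t)
  set glob : ℝ → F := fun t => (seq (⌈|t - s|⌉₊ + 1)).1 t with hglob
  have hagree : ∀ (k : ℕ) (u : ℝ), u ∈ Set.Icc (s - (k:ℝ)) (s + k) → glob u = (seq k).1 u := by
    intro k u hu
    set m := ⌈|u - s|⌉₊ + 1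
    have h1 : (seq (max k m)).1 u = (seq k).1 u := mono k (max k m) (le_max_left _ _) hu
    have h2 : (seq (max k m)).1 u = (seq m).1 u := mono m (max k m) (le_max_right _ _) (hmemIcc u)
    have hgu : glob u = (seq m).1 u := rfl
    rw [hgu, ← h2, h1]
  refine ⟨glob, ?_, ?_⟩
  · have : s ∈ Set.Icc (s - (0:ℕ) : ℝ) (s + (0:ℕ)) := by simp
    rw [hagree 0 s this]
    exact (seq 0).2.1
  · intro t
    set k := ⌈|t - s|⌉₊ + 1 with hk
    have hIoo := hmemIoo t
    have hd : HasDerivAt (seq k).1 (B t ((seq k).1 t)) t :=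
      ((seq k).2.2 t (Ioo_subset_Icc_self hIoo)).hasDerivAt
        (Icc_mem_nhds hIoo.1 hIoo.2)
    have hEqnhds : glob =ᶠ[nhds t] (seq k).1 := by
      have hopen : Set.Ioo (s - (k:ℝ)) (s + k) ∈ nhds t := Ioo_mem_nhds hIoo.1 hIoo.2
      filter_upwards [hopen] with u hu
      exact hagree k u (Ioo_subset_Icc_self hu)
    have hglobt : glob t = (seq k).1 t := hagree k t (Ioo_subset_Icc_self hIoo)
    rw [hglobt]
    exact hd.congr_of_eventuallyEq hEqnhds

-- helper : e^y - 1 ≤ y e^y for y ≥ 0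
lemma exp_sub_one_le {y : ℝ} (hy : 0 ≤ y) : Real.exp y - 1 ≤ y * Real.exp y := by
  have h1 : 1 - y ≤ Real.exp (-y) := by
    have := Real.add_one_le_exp (-y)
    linarith
  have h2 : (1 - y) * Real.exp y ≤ Real.exp (-y) * Real.exp y :=
    mul_le_mul_of_nonneg_right h1 (Real.exp_nonneg y)
  rw [← Real.exp_add] at h2
  simp at h2
  nlinarith [Real.exp_pos y]

lemma gb_le {K1 ε δ : ℝ} (hK1 : 0 < K1) (hε : 0 ≤ ε) (hδ : 0 ≤ δ) :
    gronwallBound 0 K1 ε δ ≤ ε * δ * Real.exp (K1 * δ) := by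
  rw [gronwallBound_of_K_ne_0 (ne_of_gt hK1)]
  have h1 : Real.exp (K1 * δ) - 1 ≤ (K1 * δ) * Real.exp (K1 * δ) :=
    exp_sub_one_le (by positivity)
  have h2 : ε / K1 * (Real.exp (K1 * δ) - 1) ≤ ε / K1 * ((K1 * δ) * Real.exp (K1 * δ)) :=
    mul_le_mul_of_nonneg_left h1 (by positivity)
  calc 0 * Real.exp (K1 * δ) + ε / K1 * (Real.exp (K1 * δ) - 1)
      = ε / K1 * (Real.exp (K1 * δ) - 1) := by ring
    _ ≤ ε / K1 * ((K1 * δ) * Real.exp (K1 * δ)) := h2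
    _ = ε * δ * Real.exp (K1 * δ) := by field_simp


set_option maxHeartbeats 4000000 in
lemma duhamel_est (B : ℝ → F →L[ℝ] F) (hB : Continuous B)
    (K lam : ℝ) (hK : 1 ≤ K) (hlam : 0 < lam)
    (hstab' : ∀ y : ℝ → F, (∀ t, HasDerivAt y (B t (y t)) t) →
      ∀ τ t : ℝ, 0 ≤ τ → τ ≤ t → ‖y t‖ ≤ K * Real.exp (-lam * (t - τ)) * ‖y τ‖)
    (h : ℝ → F) (hc : ContinuousOn h (Set.Ici 0))
    (x : ℝ → F) (hx : ∀ t, 0 ≤ t → HasDerivAt x (B t (x t) + h t) t)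
    {τ t : ℝ} (hτ : 0 ≤ τ) (hτt : τ ≤ t) :
    ‖x t‖ ≤ K * Real.exp (-lam * (t - τ)) * ‖x τ‖ + K * ∫ u in τ..t, ‖h u‖ := by
  have hK0 : (0:ℝ) < K := lt_of_lt_of_le zero_lt_one hK
  rcases eq_or_lt_of_le hτt with heq | hlt
  · subst heq
    simp only [sub_self, mul_zero, neg_zero, zero_mul, Real.exp_zero, mul_one,
      intervalIntegral.integral_same]
    nlinarith [norm_nonneg (x τ)]
  -- continuity facts
  have hxc : ∀ u : ℝ, 0 ≤ u → ContinuousAt x u := fun u hu => (hx u hu).continuousAt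
  have hnormh : ContinuousOn (fun u => ‖h u‖) (Ici 0) := hc.norm
  have hhInt : ∀ p q : ℝ, 0 ≤ p → p ≤ q → IntervalIntegrable (fun u => ‖h u‖) MeasureTheory.volume p q := by
    intro p q hp hpq
    apply ContinuousOn.intervalIntegrable
    apply hnormh.mono
    rw [uIcc_of_le hpq]
    intro u hu
    exact le_trans hp hu.1
  have hH : 0 ≤ ∫ u in τ..t, ‖h u‖ :=
    intervalIntegral.integral_nonneg hτt (fun u _ => norm_nonneg _)
  set H := ∫ u in τ..t, ‖h u‖ with hHdef
  -- reduce to ε-statement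
  have main : ∀ c : ℝ, 0 < c →
      ‖x t‖ ≤ K * Real.exp (-lam * (t - τ)) * ‖x τ‖ + K * H + c := by
    intro c hc0
    -- operator norm bound on [τ, t]
    obtain ⟨C, hC⟩ := isCompact_Icc.exists_bound_of_continuousOn
      (hB.continuousOn : ContinuousOn B (Set.Icc τ t))
    set M := max C 0 with hM
    have hM0 : 0 ≤ M := le_max_right _ _
    have hMb : ∀ u ∈ Icc τ t, ‖B u‖ ≤ M := fun u hu => (hC u hu).trans (le_max_left _ _)
    set K1 := M + 1 with hK1def
    have hK1 : 0 < K1 := by simp only [hK1def]; linarith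
    -- uniform continuity of h on [τ, t]
    set ρ := c / (4 * K * ((t - τ) + 1)) with hρ
    have hρ0 : 0 < ρ := by
      have h4 : 0 < 4 * K * ((t - τ) + 1) := by nlinarith
      exact div_pos hc0 h4
    obtain ⟨δ₀, hδ₀, hUC⟩ := (Metric.uniformContinuousOn_iff.mp
      (isCompact_Icc.uniformContinuousOn_of_continuous
        (hc.mono (fun u (hu : u ∈ Icc τ t) => le_trans hτ hu.1)))) ρ hρ0
    -- step thresholds
    have hq0 : 0 < c / (2 * K * (H + 1)) := by
      have : 0 < 2 * K * (H + 1) := by nlinarith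
      exact div_pos hc0 this
    set δ₁ := Real.log (1 + c / (2 * K * (H + 1))) / K1 with hδ₁def
    have hδ₁ : 0 < δ₁ := div_pos (Real.log_pos (by linarith)) hK1
    set δ₂ := Real.log 2 / K1 with hδ₂def
    have hδ₂ : 0 < δ₂ := div_pos (Real.log_pos one_lt_two) hK1
    set dmin := min (δ₀ / 2) (min δ₁ δ₂) with hdmin
    have hdmin0 : 0 < dmin := lt_min (by linarith) (lt_min hδ₁ hδ₂)
    set N := ⌈(t - τ) / dmin⌉₊ with hN
    have hN0 : 0 < N := Nat.ceil_pos.mpr (div_pos (by linarith) hdmin0)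
    have hNr : (0:ℝ) < N := by exact_mod_cast Nat.cast_pos.mpr hN0
    set δ := (t - τ) / N with hδdef
    have hδ0 : 0 < δ := div_pos (by linarith) hNr
    have hδdmin : δ ≤ dmin := by
      rw [hδdef, div_le_iff₀ hNr]
      have h1 := Nat.le_ceil ((t - τ) / dmin)
      rw [div_le_iff₀ hdmin0] at h1
      calc t - τ ≤ ⌈(t - τ) / dmin⌉₊ * dmin := h1
        _ = dmin * N := by rw [hN]; ring
    have hNδ : (N:ℝ) * δ = t - τ := by
      rw [hδdef]; field_simp
    -- exp bound
    set Ee := Real.exp (K1 * δ) with hEe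
    have hEe1 : Ee ≤ 1 + c / (2 * K * (H + 1)) := by
      have h1 : K1 * δ ≤ K1 * δ₁ := by
        apply mul_le_mul_of_nonneg_left _ hK1.le
        calc δ ≤ dmin := hδdmin
          _ ≤ min δ₁ δ₂ := min_le_right _ _
          _ ≤ δ₁ := min_le_left _ _
      have h2 : K1 * δ₁ = Real.log (1 + c / (2 * K * (H + 1))) := by
        rw [hδ₁def]; field_simp
      have h3 := Real.exp_le_exp.mpr (h1.trans h2.le)
      rwa [Real.exp_log (by linarith)] at h3
    have hEe2 : Ee ≤ 2 := by
      have h1 : K1 * δ ≤ K1 * δ₂ := by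
        apply mul_le_mul_of_nonneg_left _ hK1.le
        calc δ ≤ dmin := hδdmin
          _ ≤ min δ₁ δ₂ := min_le_right _ _
          _ ≤ δ₂ := min_le_right _ _
      have h2 : K1 * δ₂ = Real.log 2 := by rw [hδ₂def]; field_simp
      have h3 := Real.exp_le_exp.mpr (h1.trans h2.le)
      rwa [Real.exp_log (by norm_num)] at h3
    have hEe0 : 0 < Ee := Real.exp_pos _
    -- partition
    set sp : ℕ → ℝ := fun i => τ + i * δ with hsp
    have hs0 : sp 0 = τ := by simp [hsp]
    have hsN : sp N = t := by
      simp only [hsp]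
      linarith [hNδ]
    have hsstep : ∀ i : ℕ, sp (i+1) - sp i = δ := by
      intro i; simp only [hsp]; push_cast; ring
    have hsple : ∀ i : ℕ, sp i ≤ sp (i+1) := fun i => by linarith [hsstep i, hδ0]
    have hsmem : ∀ i : ℕ, i ≤ N → sp i ∈ Icc τ t := by
      intro i hi
      have h1 : (i:ℝ) ≤ N := by exact_mod_cast hi
      have h2 : 0 ≤ (i:ℝ) := Nat.cast_nonneg i
      constructor
      · simp only [hsp]; nlinarith [hδ0.le]
      · simp only [hsp]; nlinarith [hδ0.le]
    have hsτ : ∀ i : ℕ, τ ≤ sp i := by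
      intro i
      have h2 : 0 ≤ (i:ℝ) := Nat.cast_nonneg i
      simp only [hsp]; nlinarith [hδ0.le]
    have hs0le : ∀ i : ℕ, 0 ≤ sp i := fun i => le_trans hτ (hsτ i)
    clear_value M K1 ρ δ₁ δ₂ dmin N δ Ee sp
    clear_value H
    -- max points of ‖h‖ on subintervals
    have hmaxpt : ∀ i : ℕ, ∃ u ∈ Icc (sp i) (sp (i+1)),
        ∀ u' ∈ Icc (sp i) (sp (i+1)), ‖h u'‖ ≤ ‖h u‖ := by
      intro i
      obtain ⟨u, hu, hmaxu⟩ := isCompact_Icc.exists_isMaxOn (nonempty_Icc.mpr (hsple i))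
        (hnormh.mono (fun u (hu : u ∈ Icc (sp i) (sp (i+1))) => le_trans (hs0le i) hu.1))
      exact ⟨u, hu, fun u' hu' => hmaxu hu'⟩
    choose uu huu1 huu2 using hmaxpt
    -- global homogeneous solutions
    choose Y hY0 hYd using fun (s : ℝ) (v : F) => exists_global_solution B hB s v
    -- Grönwall estimate on each subinterval
    have key : ∀ i : ℕ, i < N →
        ‖x (sp (i+1)) - Y (sp i) (x (sp i)) (sp (i+1))‖ ≤ ‖h (uu i)‖ * δ * Ee := by
      intro i hiN
      have hi1N : i + 1 ≤ N := Nat.succ_le_of_lt hiN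
      have hai : sp i ∈ Icc τ t := hsmem i (le_of_lt hiN)
      have hbi : sp (i+1) ∈ Icc τ t := hsmem (i+1) hi1N
      have hIccsub : Icc (sp i) (sp (i+1)) ⊆ Icc τ t :=
        Icc_subset_Icc hai.1 hbi.2
      have hcont : ContinuousOn (fun u => x u - Y (sp i) (x (sp i)) u)
          (Icc (sp i) (sp (i+1))) := by
        intro u hu
        have hu0 : 0 ≤ u := le_trans (hs0le i) hu.1
        exact ((hxc u hu0).sub (hYd (sp i) (x (sp i)) u).continuousAt).continuousWithinAt
      have hderiv : ∀ u ∈ Ico (sp i) (sp (i+1)),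
          HasDerivWithinAt (fun u => x u - Y (sp i) (x (sp i)) u)
            (B u (x u - Y (sp i) (x (sp i)) u) + h u) (Ici u) u := by
        intro u hu
        have hu0 : 0 ≤ u := le_trans (hs0le i) hu.1
        have h1 := (hx u hu0).sub (hYd (sp i) (x (sp i)) u)
        have h2 : B u (x u) + h u - B u (Y (sp i) (x (sp i)) u)
            = B u (x u - Y (sp i) (x (sp i)) u) + h u := by
          rw [map_sub]; abel
        rw [h2] at h1
        exact h1.hasDerivWithinAt
      have hinit : ‖x (sp i) - Y (sp i) (x (sp i)) (sp i)‖ ≤ 0 := by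
        rw [hY0]; simp
      have hbound : ∀ u ∈ Ico (sp i) (sp (i+1)),
          ‖B u (x u - Y (sp i) (x (sp i)) u) + h u‖
            ≤ K1 * ‖x u - Y (sp i) (x (sp i)) u‖ + ‖h (uu i)‖ := by
        intro u hu
        have huIcc : u ∈ Icc (sp i) (sp (i+1)) := Ico_subset_Icc_self hu
        have h1 : ‖B u (x u - Y (sp i) (x (sp i)) u)‖
            ≤ M * ‖x u - Y (sp i) (x (sp i)) u‖ := by
          calc ‖B u (x u - Y (sp i) (x (sp i)) u)‖
              ≤ ‖B u‖ * ‖x u - Y (sp i) (x (sp i)) u‖ := (B u).le_opNorm _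
            _ ≤ M * ‖x u - Y (sp i) (x (sp i)) u‖ :=
                mul_le_mul_of_nonneg_right (hMb u (hIccsub huIcc)) (norm_nonneg _)
        have h2 : ‖h u‖ ≤ ‖h (uu i)‖ := huu2 i u huIcc
        calc ‖B u (x u - Y (sp i) (x (sp i)) u) + h u‖
            ≤ ‖B u (x u - Y (sp i) (x (sp i)) u)‖ + ‖h u‖ := norm_add_le _ _
          _ ≤ M * ‖x u - Y (sp i) (x (sp i)) u‖ + ‖h (uu i)‖ := add_le_add h1 h2
          _ ≤ K1 * ‖x u - Y (sp i) (x (sp i)) u‖ + ‖h (uu i)‖ := by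
              have : M ≤ K1 := by rw [hK1def]; linarith
              nlinarith [norm_nonneg (x u - Y (sp i) (x (sp i)) u)]
      have hgron := norm_le_gronwallBound_of_norm_deriv_right_le
        hcont hderiv hinit hbound (sp (i+1)) ⟨hsple i, le_rfl⟩
      rw [hsstep i] at hgron
      calc ‖x (sp (i+1)) - Y (sp i) (x (sp i)) (sp (i+1))‖
          ≤ gronwallBound 0 K1 (‖h (uu i)‖) δ := hgron
        _ ≤ ‖h (uu i)‖ * δ * Ee := by rw [hEe]; exact gb_le hK1 (norm_nonneg _) hδ0.le
    -- telescoping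
    set Fn : ℕ → F := fun i => Y (sp i) (x (sp i)) t with hFn
    have hFN : Fn N = x t := by
      simp only [hFn, hsN]
      exact hY0 t (x t)
    have hF0 : ‖Fn 0‖ ≤ K * Real.exp (-lam * (t - τ)) * ‖x τ‖ := by
      have h1 := hstab' (Y τ (x τ)) (hYd τ (x τ)) τ t hτ hτt
      rw [hY0 τ (x τ)] at h1
      simp only [hFn, hs0]
      exact h1
    have hdiff : ∀ i : ℕ, i < N →
        ‖Fn (i+1) - Fn i‖ ≤ K * (‖h (uu i)‖ * δ * Ee) := by
      intro i hiN
      simp only [hFn]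
      have hi1N : i + 1 ≤ N := Nat.succ_le_of_lt hiN
      have hgd : ∀ u, HasDerivAt
          (fun u => Y (sp (i+1)) (x (sp (i+1))) u - Y (sp i) (x (sp i)) u)
          (B u (Y (sp (i+1)) (x (sp (i+1))) u - Y (sp i) (x (sp i)) u)) u := by
        intro u
        have h1 := (hYd (sp (i+1)) (x (sp (i+1))) u).sub (hYd (sp i) (x (sp i)) u)
        rwa [← map_sub] at h1
      have h1 := hstab' _ hgd (sp (i+1)) t (hs0le (i+1)) (hsmem (i+1) hi1N).2
      have h2 : Y (sp (i+1)) (x (sp (i+1))) (sp (i+1)) - Y (sp i) (x (sp i)) (sp (i+1))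
          = x (sp (i+1)) - Y (sp i) (x (sp i)) (sp (i+1)) := by
        rw [hY0]
      rw [h2] at h1
      have h3 : Real.exp (-lam * (t - sp (i+1))) ≤ 1 := by
        rw [Real.exp_le_one_iff]
        have := (hsmem (i+1) hi1N).2
        nlinarith
      calc ‖Y (sp (i+1)) (x (sp (i+1))) t - Y (sp i) (x (sp i)) t‖
          ≤ K * Real.exp (-lam * (t - sp (i+1)))
            * ‖x (sp (i+1)) - Y (sp i) (x (sp i)) (sp (i+1))‖ := h1
        _ ≤ K * 1 * (‖h (uu i)‖ * δ * Ee) := by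
            apply mul_le_mul
            · nlinarith [hK0]
            · exact key i hiN
            · exact norm_nonneg _
            · nlinarith [hK0]
        _ = K * (‖h (uu i)‖ * δ * Ee) := by ring
    -- per-interval integral bound
    have hkey2 : ∀ i : ℕ, i < N →
        ‖h (uu i)‖ * δ ≤ (∫ u in (sp i)..(sp (i+1)), ‖h u‖) + ρ * δ := by
      intro i hiN
      have hi1N : i + 1 ≤ N := Nat.succ_le_of_lt hiN
      have hIccsub : Icc (sp i) (sp (i+1)) ⊆ Icc τ t :=
        Icc_subset_Icc (hsmem i (le_of_lt hiN)).1 (hsmem (i+1) hi1N).2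
      have hlow : ∀ u ∈ Icc (sp i) (sp (i+1)), ‖h (uu i)‖ - ρ ≤ ‖h u‖ := by
        intro u hu
        have hd : dist (uu i) u < δ₀ := by
          rw [Real.dist_eq]
          have h1 := (huu1 i).1
          have h2 := (huu1 i).2
          have h3 := hsstep i
          have h4 : |uu i - u| ≤ δ := by
            rw [abs_le]
            constructor <;> [linarith [hu.2]; linarith [hu.1]]
          calc |uu i - u| ≤ δ := h4
            _ ≤ dmin := hδdmin
            _ ≤ δ₀ / 2 := by rw [hdmin]; exact min_le_left _ _
            _ < δ₀ := by linarith
        have h5 := hUC (uu i) (hIccsub (huu1 i)) u (hIccsub hu) hd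
        rw [dist_eq_norm] at h5
        have h6 : ‖h (uu i)‖ - ‖h u‖ ≤ ‖h (uu i) - h u‖ := norm_sub_norm_le _ _
        linarith
      have hint : IntervalIntegrable (fun u => ‖h u‖) MeasureTheory.volume
          (sp i) (sp (i+1)) := hhInt _ _ (hs0le i) (hsple i)
      have hintc : IntervalIntegrable (fun _ : ℝ => ‖h (uu i)‖ - ρ) MeasureTheory.volume
          (sp i) (sp (i+1)) := intervalIntegrable_const
      have h7 := intervalIntegral.integral_mono_on (hsple i) hintc hint hlow
      rw [intervalIntegral.integral_const] at h7
      rw [hsstep i] at h7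
      simp only [smul_eq_mul] at h7
      nlinarith [hρ0.le, hδ0.le]
    -- sum of integrals
    have hsum : ∑ i ∈ Finset.range N, (∫ u in (sp i)..(sp (i+1)), ‖h u‖) = H := by
      rw [intervalIntegral.sum_integral_adjacent_intervals
        (fun k _ => hhInt (sp k) (sp (k+1)) (hs0le k) (hsple k))]
      rw [hs0, hsN, hHdef]
    -- combine
    have htel : x t - Fn 0 = ∑ i ∈ Finset.range N, (Fn (i+1) - Fn i) := by
      rw [Finset.sum_range_sub, hFN]
    have hsum2 : ‖x t - Fn 0‖ ≤ K * Ee * (H + ρ * (t - τ)) := by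
      rw [htel]
      calc ‖∑ i ∈ Finset.range N, (Fn (i+1) - Fn i)‖
          ≤ ∑ i ∈ Finset.range N, ‖Fn (i+1) - Fn i‖ := norm_sum_le _ _
        _ ≤ ∑ i ∈ Finset.range N, K * Ee * ((∫ u in (sp i)..(sp (i+1)), ‖h u‖) + ρ * δ) := by
            apply Finset.sum_le_sum
            intro i hi
            rw [Finset.mem_range] at hi
            have h1 := hdiff i hi
            have h2 := hkey2 i hi
            calc ‖Fn (i+1) - Fn i‖ ≤ K * (‖h (uu i)‖ * δ * Ee) := h1
              _ ≤ K * Ee * ((∫ u in (sp i)..(sp (i+1)), ‖h u‖) + ρ * δ) := by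
                  have h3 := mul_le_mul_of_nonneg_left h2 (mul_nonneg hK0.le hEe0.le)
                  linarith [h3]
        _ = K * Ee * (H + ρ * (t - τ)) := by
            rw [← Finset.mul_sum, Finset.sum_add_distrib, hsum,
              Finset.sum_const, Finset.card_range]
            rw [nsmul_eq_mul]
            have : (N:ℝ) * (ρ * δ) = ρ * (t - τ) := by
              rw [← hNδ]; ring
            rw [this]
    have hfinal1 : K * Ee * H ≤ K * H + c / 2 := by
      have h1 : K * Ee * H ≤ K * (1 + c / (2 * K * (H + 1))) * H := by
        have h3 := mul_le_mul_of_nonneg_left hEe1 (mul_nonneg hK0.le hH)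
        linarith [h3]
      have h2 : K * (1 + c / (2 * K * (H + 1))) * H = K * H + c * H / (2 * (H + 1)) := by
        have hKne : K ≠ 0 := ne_of_gt hK0
        have hH1 : H + 1 ≠ 0 := by linarith
        field_simp
      have h3 : c * H / (2 * (H + 1)) ≤ c / 2 := by
        rw [div_le_div_iff₀ (by linarith) (by norm_num)]
        nlinarith
      linarith
    have hfinal2 : K * Ee * (ρ * (t - τ)) ≤ c / 2 := by
      have h1 : K * Ee * (ρ * (t - τ)) ≤ K * 2 * (ρ * (t - τ)) := by
        have h3 := mul_le_mul_of_nonneg_left hEe2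
          (mul_nonneg hK0.le (mul_nonneg hρ0.le (by linarith : (0:ℝ) ≤ t - τ)))
        linarith [h3]
      have h2 : K * 2 * (ρ * (t - τ)) = c * (t - τ) / (2 * ((t - τ) + 1)) := by
        have hKne : K ≠ 0 := ne_of_gt hK0
        have htne : (t - τ) + 1 ≠ 0 := by linarith
        rw [hρ]
        field_simp
        ring
      have h3 : c * (t - τ) / (2 * ((t - τ) + 1)) ≤ c / 2 := by
        rw [div_le_div_iff₀ (by nlinarith) (by norm_num)]
        nlinarith
      linarith
    have hxx : Fn 0 + (x t - Fn 0) = x t := by abel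
    calc ‖x t‖ = ‖Fn 0 + (x t - Fn 0)‖ := by rw [hxx]
      _ ≤ ‖Fn 0‖ + ‖x t - Fn 0‖ := norm_add_le _ _
      _ ≤ K * Real.exp (-lam * (t - τ)) * ‖x τ‖ + K * Ee * (H + ρ * (t - τ)) :=
          add_le_add hF0 hsum2
      _ = K * Real.exp (-lam * (t - τ)) * ‖x τ‖ + (K * Ee * H + K * Ee * (ρ * (t - τ))) := by
          ring
      _ ≤ K * Real.exp (-lam * (t - τ)) * ‖x τ‖ + K * H + c := by
          linarith [hfinal1, hfinal2]
  have := le_of_forall_pos_le_add main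
  linarith [this]

end ODE

set_option maxHeartbeats 2000000 in
theorem module3 {G : Type*} [NormedAddCommGroup G] {G' : Type*} [NormedAddCommGroup G']
    (K lam : ℝ) (hK : 1 ≤ K) (hlam : 0 < lam)
    (h : ℝ → G) (hc : ContinuousOn h (Set.Ici (0 : ℝ)))
    (hAD : Tendsto (fun t : ℝ => ∫ s in t..(t + 1), ‖h s‖) atTop (nhds 0))
    (x : ℝ → G')
    (est : ∀ τ t : ℝ, 0 ≤ τ → τ ≤ t →
      ‖x t‖ ≤ K * Real.exp (-lam * (t - τ)) * ‖x τ‖ + K * ∫ u in τ..t, ‖h u‖) :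
    Tendsto (fun t : ℝ => ‖x t‖) atTop (nhds 0) := by
  have hK0 : (0:ℝ) < K := lt_of_lt_of_le zero_lt_one hK
  have hhInt : ∀ p q : ℝ, 0 ≤ p → p ≤ q →
      IntervalIntegrable (fun u => ‖h u‖) MeasureTheory.volume p q := by
    intro p q hp hpq
    apply ContinuousOn.intervalIntegrable
    apply hc.norm.mono
    rw [uIcc_of_le hpq]
    exact fun u hu => le_trans hp hu.1
  -- block length
  set T := max 1 (Real.log (2*K) / lam) with hT
  have hT1 : (1:ℝ) ≤ T := le_max_left _ _
  have hT0 : (0:ℝ) < T := by linarith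
  have hTK : K * Real.exp (-lam * T) ≤ 1/2 := by
    have h2K : (0:ℝ) < 2*K := by linarith
    have h1 : Real.log (2*K) / lam ≤ T := le_max_right _ _
    have h2 : Real.log (2*K) ≤ lam * T := by
      rw [div_le_iff₀ hlam] at h1
      linarith
    have h3 : Real.exp (-lam*T) ≤ Real.exp (-Real.log (2*K)) := by
      apply Real.exp_le_exp.mpr
      linarith
    rw [Real.exp_neg, Real.exp_log h2K] at h3
    calc K * Real.exp (-lam*T) ≤ K * (2*K)⁻¹ := mul_le_mul_of_nonneg_left h3 hK0.le
      _ = 1/2 := by field_simp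
  set P := ⌈T⌉₊ with hP
  have hP1 : 1 ≤ P := Nat.one_le_ceil_iff.mpr hT0
  have hTP : T ≤ P := Nat.le_ceil T
  have hP0 : (0:ℝ) < P := lt_of_lt_of_le hT0 hTP
  -- final goal via metric characterization
  rw [Metric.tendsto_atTop]
  intro ε hε
  -- choose η
  set η := ε / (4*K*K*P + 2*K*P) with hη
  have hden : (0:ℝ) < 4*K*K*P + 2*K*P := by positivity
  have hη0 : 0 < η := div_pos hε hden
  -- find t₀
  obtain ⟨t₀', ht₀'⟩ := (Metric.tendsto_atTop.mp hAD) η hη0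
  set t₀ := max t₀' 0 with ht₀def
  have ht₀0 : 0 ≤ t₀ := le_max_right _ _
  have hsmall : ∀ u : ℝ, t₀ ≤ u → (∫ s in u..(u+1), ‖h s‖) ≤ η := by
    intro u hu
    have := ht₀' u (le_trans (le_max_left _ _) hu)
    rw [Real.dist_eq, sub_zero] at this
    exact le_trans (le_abs_self _) this.le
  -- block integral bound
  have hblock : ∀ τ t : ℝ, t₀ ≤ τ → τ ≤ t → t ≤ τ + T → (∫ u in τ..t, ‖h u‖) ≤ P * η := by
    intro τ t hτ hτt htT
    have hτ0 : 0 ≤ τ := le_trans ht₀0 hτ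
    have h1 : (∫ u in τ..t, ‖h u‖) ≤ ∫ u in τ..(τ + P), ‖h u‖ := by
      apply intervalIntegral.integral_mono_interval (le_refl τ) hτt
        (by linarith) (MeasureTheory.ae_of_all _ (fun u => norm_nonneg _))
      exact hhInt τ (τ + P) hτ0 (by linarith)
    have hint : ∀ k : ℕ, k < P → IntervalIntegrable (fun u => ‖h u‖)
        MeasureTheory.volume (τ + k) (τ + (k+1:ℕ)) := by
      intro k _
      apply hhInt _ _ (by positivity) (by push_cast; linarith)
    have h2 := intervalIntegral.sum_integral_adjacent_intervals hint
    simp only [Nat.cast_zero, add_zero] at h2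
    have h3 : ∀ j : ℕ, (∫ u in (τ + j)..(τ + (j+1:ℕ)), ‖h u‖) ≤ η := by
      intro j
      have hj : t₀ ≤ τ + j := by
        have : (0:ℝ) ≤ j := Nat.cast_nonneg j
        linarith
      have hs := hsmall (τ + j) hj
      have harg : τ + ((j+1:ℕ):ℝ) = (τ + j) + 1 := by push_cast; ring
      rw [harg]
      exact hs
    calc (∫ u in τ..t, ‖h u‖) ≤ ∫ u in τ..(τ + P), ‖h u‖ := h1
      _ = ∑ j ∈ Finset.range P, ∫ u in (τ + j)..(τ + (j+1:ℕ)), ‖h u‖ := h2.symm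
      _ ≤ ∑ j ∈ Finset.range P, η := Finset.sum_le_sum (fun j _ => h3 j)
      _ = P * η := by rw [Finset.sum_const, Finset.card_range, nsmul_eq_mul]
  -- recursion over blocks
  set a : ℕ → ℝ := fun m => ‖x (t₀ + m*T)‖ with ha
  have hrec : ∀ m : ℕ, a (m+1) ≤ (1/2) * a m + K*(P*η) := by
    intro m
    have hm0 : (0:ℝ) ≤ m := Nat.cast_nonneg m
    have hτ0 : 0 ≤ t₀ + m*T := by nlinarith
    have hstep : t₀ + m*T ≤ t₀ + (m+1:ℕ)*T := by push_cast; nlinarith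
    have h1 := est (t₀ + m*T) (t₀ + (m+1:ℕ)*T) hτ0 hstep
    have h2 : (t₀ + (m+1:ℕ)*T) - (t₀ + m*T) = T := by push_cast; ring
    rw [h2] at h1
    have h3 : (∫ u in (t₀ + m*T)..(t₀ + (m+1:ℕ)*T), ‖h u‖) ≤ P * η := by
      apply hblock _ _ (by nlinarith) hstep (by push_cast; nlinarith)
    calc a (m+1) ≤ K * Real.exp (-lam * T) * ‖x (t₀ + m*T)‖
          + K * ∫ u in (t₀ + m*T)..(t₀ + (m+1:ℕ)*T), ‖h u‖ := h1
      _ ≤ (1/2) * a m + K*(P*η) := by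
          have h4 : K * Real.exp (-lam * T) * ‖x (t₀ + m*T)‖ ≤ (1/2) * a m := by
            apply mul_le_mul_of_nonneg_right hTK (norm_nonneg _)
          have h5 : K * (∫ u in (t₀ + m*T)..(t₀ + (m+1:ℕ)*T), ‖h u‖) ≤ K*(P*η) :=
            mul_le_mul_of_nonneg_left h3 hK0.le
          linarith
  have hgeo : ∀ m : ℕ, a m ≤ (1/2)^m * a 0 + 2*(K*(P*η)) := by
    intro m
    induction m with
    | zero =>
      have hpos := mul_pos hK0 (mul_pos hP0 hη0)
      simp only [pow_zero, one_mul]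
      linarith
    | succ m ih =>
      have h1 := hrec m
      have h2 : (1/2) * a m ≤ (1/2) * ((1/2)^m * a 0 + 2*(K*(P*η))) := by linarith
      calc a (m+1) ≤ (1/2) * a m + K*(P*η) := h1
        _ ≤ (1/2) * ((1/2)^m * a 0 + 2*(K*(P*η))) + K*(P*η) := by linarith
        _ = (1/2)^(m+1) * a 0 + 2*(K*(P*η)) := by ring
  -- within-block bound
  have hin : ∀ m : ℕ, ∀ t : ℝ, t₀ + m*T ≤ t → t ≤ t₀ + (m+1:ℕ)*T →
      ‖x t‖ ≤ K * a m + K*(P*η) := by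
    intro m t h1 h2
    have hm0 : (0:ℝ) ≤ m := Nat.cast_nonneg m
    have hτ0 : 0 ≤ t₀ + m*T := by nlinarith
    have h3 := est (t₀ + m*T) t hτ0 h1
    have h4 : Real.exp (-lam * (t - (t₀ + m*T))) ≤ 1 := by
      rw [Real.exp_le_one_iff]
      nlinarith
    have h5 : (∫ u in (t₀ + m*T)..t, ‖h u‖) ≤ P * η := by
      apply hblock _ _ (by nlinarith) h1 (by push_cast at h2 ⊢; nlinarith)
    calc ‖x t‖ ≤ K * Real.exp (-lam * (t - (t₀ + m*T))) * ‖x (t₀ + m*T)‖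
          + K * ∫ u in (t₀ + m*T)..t, ‖h u‖ := h3
      _ ≤ K * a m + K*(P*η) := by
          have h6 : K * Real.exp (-lam * (t - (t₀ + m*T))) * ‖x (t₀ + m*T)‖
              ≤ K * a m := by
            have := mul_le_mul_of_nonneg_right
              (mul_le_mul_of_nonneg_left h4 hK0.le) (norm_nonneg (x (t₀ + m*T)))
            simpa using this
          have h7 : K * (∫ u in (t₀ + m*T)..t, ‖h u‖) ≤ K*(P*η) :=
            mul_le_mul_of_nonneg_left h5 hK0.le
          linarith
  -- KPη small
  have hKPη : K*(2*(K*(P*η))) + K*(P*η) = ε/2 := by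
    rw [hη]
    field_simp
    ring
  -- choose m₀
  obtain ⟨m₀, hm₀⟩ : ∃ m₀ : ℕ, K * (1/2)^m₀ * a 0 < ε/4 := by
    obtain ⟨m₀, hm₀⟩ := exists_pow_lt_of_lt_one
      (show (0:ℝ) < (ε/4) / (K * (a 0 + 1)) by
        have : (0:ℝ) < K * (a 0 + 1) := by nlinarith [norm_nonneg (x (t₀ + (0:ℕ)*T))]
        positivity)
      (show (1:ℝ)/2 < 1 by norm_num)
    refine ⟨m₀, ?_⟩
    have ha0 : 0 ≤ a 0 := norm_nonneg _
    have hKa : (0:ℝ) < K * (a 0 + 1) := by nlinarith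
    have h1 : (1/2:ℝ)^m₀ * (K * (a 0 + 1)) < (ε/4) / (K * (a 0 + 1)) * (K * (a 0 + 1)) :=
      mul_lt_mul_of_pos_right hm₀ hKa
    rw [div_mul_cancel₀] at h1
    · nlinarith [pow_pos (show (0:ℝ) < 1/2 by norm_num) m₀]
    · exact ne_of_gt hKa
  refine ⟨t₀ + m₀*T, fun t ht => ?_⟩
  -- identify block index
  set m := ⌊(t - t₀)/T⌋₊ with hm
  have hm₀0 : (0:ℝ) ≤ m₀ := Nat.cast_nonneg m₀
  have htt₀ : (0:ℝ) ≤ t - t₀ := by nlinarith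
  have hmle : (m:ℝ) ≤ (t - t₀)/T := Nat.floor_le (by positivity)
  have hmlt : (t - t₀)/T < m + 1 := Nat.lt_floor_add_one _
  have hblk1 : t₀ + m*T ≤ t := by
    rw [le_div_iff₀ hT0] at hmle
    linarith
  have hblk2 : t ≤ t₀ + (m+1:ℕ)*T := by
    rw [div_lt_iff₀ hT0] at hmlt
    push_cast
    linarith
  have hmm₀ : m₀ ≤ m := by
    apply Nat.le_floor
    rw [le_div_iff₀ hT0]
    nlinarith
  have hpow : (1/2:ℝ)^m ≤ (1/2)^m₀ :=
    pow_le_pow_of_le_one (by norm_num) (by norm_num) hmm₀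
  -- final bound
  have hfin : ‖x t‖ ≤ K * ((1/2)^m₀ * a 0 + 2*(K*(P*η))) + K*(P*η) := by
    have h1 := hin m t hblk1 hblk2
    have h2 := hgeo m
    have h3 : a m ≤ (1/2)^m₀ * a 0 + 2*(K*(P*η)) := by
      have : (1/2:ℝ)^m * a 0 ≤ (1/2)^m₀ * a 0 :=
        mul_le_mul_of_nonneg_right hpow (norm_nonneg _)
      linarith
    have h4 : K * a m ≤ K * ((1/2)^m₀ * a 0 + 2*(K*(P*η))) :=
      mul_le_mul_of_nonneg_left h3 hK0.le
    linarith
  rw [Real.dist_eq, sub_zero, abs_of_nonneg (norm_nonneg _)]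
  calc ‖x t‖ ≤ K * ((1/2)^m₀ * a 0 + 2*(K*(P*η))) + K*(P*η) := hfin
    _ = K * (1/2)^m₀ * a 0 + (K*(2*(K*(P*η))) + K*(P*η)) := by ring
    _ < ε/4 + ε/2 := by rw [hKPη]; linarith [hm₀]
    _ < ε := by linarith

set_option maxHeartbeats 1000000 in
/-- if the zero solution of `ẋ = A(t)x` is globally uniformly
exponentially stable and `h ∈ 𝒜𝒟`, then every solution of the perturbed system
`ẋ = A(t)x + h(t)` tends to `0`. -/
theorem stmt_10 (n : ℕ) (hn : 1 ≤ n)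
    (A : ℝ → Matrix (Fin n) (Fin n) ℝ)
    (hA : ContinuousOn A (Set.Ici (0 : ℝ)))
    (K lam : ℝ) (hK : 1 ≤ K) (hlam : 0 < lam)
    (hstab : ∀ y : ℝ → EuclideanSpace ℝ (Fin n),
      (∀ t : ℝ, 0 ≤ t → HasDerivAt y (Matrix.toEuclideanLin (A t) (y t)) t) →
      ∀ τ t : ℝ, 0 ≤ τ → τ ≤ t →
        ‖y t‖ ≤ K * Real.exp (-lam * (t - τ)) * ‖y τ‖)
    (h : ℝ → EuclideanSpace ℝ (Fin n))
    (hc : ContinuousOn h (Set.Ici (0 : ℝ)))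
    (hAD : Tendsto (fun t : ℝ => ∫ s in t..(t + 1), ‖h s‖) atTop (nhds 0))
    (x : ℝ → EuclideanSpace ℝ (Fin n))
    (hx : ∀ t : ℝ, 0 ≤ t →
      HasDerivAt x (Matrix.toEuclideanLin (A t) (x t) + h t) t) :
    Tendsto (fun t : ℝ => ‖x t‖) atTop (nhds 0) := by
  -- the continuous-linear-map version of the (extended) coefficient
  let E := EuclideanSpace ℝ (Fin n)
  let B : ℝ → E →L[ℝ] E := fun t =>
    LinearMap.toContinuousLinearMap (Matrix.toEuclideanLin (A (max t 0)))
  have hBdef : ∀ t, B t = LinearMap.toContinuousLinearMap (Matrix.toEuclideanLin (A (max t 0))) :=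
    fun t => rfl
  have hB : Continuous B := by
    have hAmax : Continuous (fun t : ℝ => A (max t 0)) := by
      apply hA.comp_continuous (continuous_id.max continuous_const)
      intro t
      exact le_max_right t 0
    let φ : Matrix (Fin n) (Fin n) ℝ →ₗ[ℝ] (E →L[ℝ] E) :=
      (LinearMap.toContinuousLinearMap.toLinearMap).comp
        (Matrix.toEuclideanLin.toLinearMap)
    have hφ : Continuous φ := φ.continuous_of_finiteDimensional
    exact hφ.comp hAmax
  have hBapp : ∀ t : ℝ, 0 ≤ t → ∀ v : E, B t v = Matrix.toEuclideanLin (A t) v := by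
    intro t ht v
    rw [hBdef]
    simp [max_eq_left ht]
  have hstab' : ∀ y : ℝ → E, (∀ t, HasDerivAt y (B t (y t)) t) →
      ∀ τ t : ℝ, 0 ≤ τ → τ ≤ t → ‖y t‖ ≤ K * Real.exp (-lam * (t - τ)) * ‖y τ‖ := by
    intro y hy
    refine hstab y (fun t ht => ?_)
    have := hy t
    rwa [hBapp t ht] at this
  have hx' : ∀ t, 0 ≤ t → HasDerivAt x (B t (x t) + h t) t := by
    intro t ht
    rw [hBapp t ht]
    exact hx t ht
  have est : ∀ τ t : ℝ, 0 ≤ τ → τ ≤ t →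
      ‖x t‖ ≤ K * Real.exp (-lam * (t - τ)) * ‖x τ‖ + K * ∫ u in τ..t, ‖h u‖ :=
    fun τ t hτ hτt => duhamel_est B hB K lam hK hlam hstab' h hc x hx' hτ hτt
  exact module3 K lam hK hlam h hc hAD x est
end
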